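/- arXiv:1504.02250 — 6 statements merged into one kernel-verified Lean document; each statement's English description precedes it below -/
import Mathlib

section
/- Let G be a bipartite graph and let I be a maximum independent set in G with an accessibility ordering σ: x_1,...,x_k. Then the set M^σ = { y·p(y) : y ∈ N(I) }, where p(y) = x_i with i minimal such that y ∈ N(x_i), is a maximum matching in G. -/
variable {V : Type*}

/-- `M` is a matching in `G`: a set of edges of `G` that are pairwise disjoint. -/
def IsMatchingSet (G : SimpleGraph V) (M : Set (Sym2 V)) : Prop :=
  M ⊆ G.edgeSet ∧ ∀ e ∈ M, ∀ f ∈ M, e ≠ f → ∀ v : V, v ∈ e → v ∉ f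

/-- `V(M)`: the set of vertices covered by the matching `M`. -/
def matVerts (M : Set (Sym2 V)) : Set V := {v | ∃ e ∈ M, v ∈ e}

/-- `M` is a maximum matching in `G`. -/
def IsMaximumMatching (G : SimpleGraph V) (M : Set (Sym2 V)) : Prop :=
  IsMatchingSet G M ∧ ∀ M', IsMatchingSet G M' → M'.ncard ≤ M.ncard

/-- `M` is uniquely restricted: no matching distinct from `M` covers the same vertices. -/
def UniquelyRestricted (G : SimpleGraph V) (M : Set (Sym2 V)) : Prop :=
  ∀ M', IsMatchingSet G M' → matVerts M' = matVerts M → M' = M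

/-- `M` is a perfect matching of `G`. -/
def IsPerfectMatchingSet (G : SimpleGraph V) (M : Set (Sym2 V)) : Prop :=
  IsMatchingSet G M ∧ matVerts M = Set.univ

/-- `A, B` form a bipartition of `G`. -/
def IsBipartition (G : SimpleGraph V) (A B : Set V) : Prop :=
  Disjoint A B ∧ A ∪ B = Set.univ ∧
    ∀ ⦃u v : V⦄, G.Adj u v → (u ∈ A ∧ v ∈ B) ∨ (u ∈ B ∧ v ∈ A)

/-- `I` is an independent set in `G`. -/
def IsIndepSet (G : SimpleGraph V) (I : Set V) : Prop :=
  ∀ u ∈ I, ∀ v ∈ I, ¬ G.Adj u v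

/-- `I` is a maximum independent set in `G`. -/
def IsMaximumIndepSet (G : SimpleGraph V) (I : Set V) : Prop :=
  IsIndepSet G I ∧ ∀ J, IsIndepSet G J → J.ncard ≤ I.ncard

/-- The arcs of the digraph `D(M)`: edges not in `M` oriented from `A` to `B`,
edges of `M` oriented from `B` to `A`. -/
def DMarc (G : SimpleGraph V) (A B : Set V) (M : Set (Sym2 V)) (u v : V) : Prop :=
  G.Adj u v ∧ ((u ∈ A ∧ v ∈ B ∧ s(u, v) ∉ M) ∨ (u ∈ B ∧ v ∈ A ∧ s(u, v) ∈ M))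

/-- The digraph `D(M)` is acyclic. -/
def DMAcyclic (G : SimpleGraph V) (A B : Set V) (M : Set (Sym2 V)) : Prop :=
  ∀ v : V, ¬ Relation.TransGen (DMarc G A B M) v v

/-- `V⁺(M)`: vertices reachable in `D(M)` from an `A`-vertex uncovered by `M`. -/
def Vplus (G : SimpleGraph V) (A B : Set V) (M : Set (Sym2 V)) : Set V :=
  {v | ∃ a ∈ A, a ∉ matVerts M ∧ Relation.ReflTransGen (DMarc G A B M) a v}

/-- `V⁻(M)`: vertices from which a `B`-vertex uncovered by `M` is reachable in `D(M)`. -/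
def Vminus (G : SimpleGraph V) (A B : Set V) (M : Set (Sym2 V)) : Set V :=
  {v | ∃ b ∈ B, b ∉ matVerts M ∧ Relation.ReflTransGen (DMarc G A B M) v b}

/-- Given a linear ordering `l` of an independent set, `Mσ G l` is the set of edges
`y·p(y)` where `p(y)` is the first vertex of `l` adjacent to `y`. -/
def Msigma (G : SimpleGraph V) (l : List V) : Set (Sym2 V) :=
  {e | ∃ (i : Fin l.length) (y : V), e = s(y, l.get i) ∧ G.Adj (l.get i) y ∧
      ∀ j : Fin l.length, (j : ℕ) < (i : ℕ) → ¬ G.Adj (l.get j) y}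

/-- `l` is an accessibility ordering of `I`: it enumerates `I` without repetition
and `Mσ` is a matching. -/
def IsAccessibilityOrdering (G : SimpleGraph V) (I : Set V) (l : List V) : Prop :=
  l.Nodup ∧ {v | v ∈ l} = I ∧ IsMatchingSet G (Msigma G l)

/-- A partial accessibility ordering: an accessibility ordering of a subset of `I`. -/
def IsPartialAccessibilityOrdering (G : SimpleGraph V) (I : Set V) (l : List V) : Prop :=
  l.Nodup ∧ {v | v ∈ l} ⊆ I ∧ IsMatchingSet G (Msigma G l)

/-- `c` is an `M`-alternating cycle: of every two adjacent edges exactly one is in `M`. -/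
def IsAlternatingCycle (G : SimpleGraph V) (M : Set (Sym2 V)) {v : V} (c : G.Walk v v) : Prop :=
  c.IsCycle ∧ (c.edges ++ c.edges.take 1).Chain' (fun e f => e ∈ M ↔ f ∉ M)

/-- `M'` arises from `M` by a single edge exchange. -/
def EdgeExchange (G : SimpleGraph V) (A B : Set V) (M M' : Set (Sym2 V)) : Prop :=
  (∃ a a' b' : V, a ∈ A ∧ a ∉ matVerts M ∧ s(a', b') ∈ M ∧ G.Adj a b' ∧
      M' = (M \ {s(a', b')}) ∪ {s(a, b')}) ∨
  (∃ b a' b' : V, b ∈ B ∧ b ∉ matVerts M ∧ s(a', b') ∈ M ∧ G.Adj a' b ∧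
      M' = (M \ {s(a', b')}) ∪ {s(a', b)})

/-- If `I` is a maximum independent set with accessibility ordering `l`, then `Mσ`
is a maximum matching. -/
theorem stmt2 [Fintype V] (G : SimpleGraph V) (A B : Set V) (hbip : IsBipartition G A B)
    (I : Set V) (hI : IsMaximumIndepSet G I)
    (l : List V) (hl : IsAccessibilityOrdering G I l) :
    IsMaximumMatching G (Msigma G l) := by
  classical
  obtain ⟨hind, hmax⟩ := hI
  obtain ⟨hnodup, hset, hmatch⟩ := hl
  -- every vertex not in I has a neighbor in I
  have hnbr : ∀ v, v ∉ I → ∃ u ∈ I, G.Adj u v := by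
    intro v hv
    by_contra hc
    push_neg at hc
    have hJ : IsIndepSet G (insert v I) := by
      intro a ha b hb hab
      rcases ha with rfl | ha
      · rcases hb with rfl | hb
        · exact G.irrefl hab
        · exact hc b hb hab.symm
      · rcases hb with rfl | hb
        · exact hc a ha hab
        · exact hind a ha b hb hab
    have hle := hmax _ hJ
    rw [Set.ncard_insert_of_notMem hv (Set.toFinite I)] at hle
    omega
  set f : Sym2 V → V :=
    fun e => if h : ∃ w, w ∈ e ∧ w ∉ I then h.choose else (Quot.out e).1 with hf
  have hfspec : ∀ e : Sym2 V, (∃ w, w ∈ e ∧ w ∉ I) → f e ∈ e ∧ f e ∉ I := by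
    intro e h
    rw [hf]
    simp only [dif_pos h]
    exact h.choose_spec
  -- any edge of G has an endpoint not in I
  have hedge : ∀ e ∈ G.edgeSet, ∃ w, w ∈ e ∧ w ∉ I := by
    intro e he
    induction e with
    | h u v =>
      by_cases hu : u ∈ I
      · exact ⟨v, by simp, fun hv => hind u hu v hv he⟩
      · exact ⟨u, by simp, hu⟩
  -- injectivity of f on any matching
  have hinj : ∀ M : Set (Sym2 V), IsMatchingSet G M → Set.InjOn f M := by
    intro M hM e he e' he' hfe
    by_contra hne
    have h1 := hfspec e (hedge e (hM.1 he))
    have h2 := hfspec e' (hedge e' (hM.1 he'))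
    exact hM.2 e he e' he' hne (f e) h1.1 (hfe ▸ h2.1)
  -- f maps Msigma onto Iᶜ
  have hgetI : ∀ i : Fin l.length, l.get i ∈ I := by
    intro i
    rw [← hset]
    exact List.get_mem l i
  have hMσ : ∀ e ∈ Msigma G l, ∃ (y : V) (i : Fin l.length), e = s(y, l.get i) ∧ y ∉ I ∧ f e = y := by
    intro e he
    obtain ⟨i, y, rfl, hadj, -⟩ := he
    have hyI : y ∉ I := fun hy => hind _ (hgetI i) y hy hadj
    have hsp := hfspec s(y, l.get i) ⟨y, Sym2.mem_mk_left y _, hyI⟩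
    refine ⟨y, i, rfl, hyI, ?_⟩
    rcases Sym2.mem_iff.mp hsp.1 with h | h
    · exact h
    · exact absurd (hgetI i) (h ▸ hsp.2)
  have himg : f '' (Msigma G l) = Iᶜ := by
    apply Set.Subset.antisymm
    · rintro _ ⟨e, he, rfl⟩
      obtain ⟨y, i, -, hyI, hfy⟩ := hMσ e he
      rw [Set.mem_compl_iff, hfy]; exact hyI
    · intro v hv
      obtain ⟨u, huI, hadj⟩ := hnbr v hv
      have hul : u ∈ l := by rw [← Set.ext_iff.mp hset u] at huI; exact huI
      obtain ⟨k, hkget⟩ := List.mem_iff_get.mp hul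
      have hex : ∃ n : ℕ, ∃ h : n < l.length, G.Adj (l.get ⟨n, h⟩) v :=
        ⟨k.1, k.2, by show G.Adj (l.get k) v; rw [hkget]; exact hadj⟩
      let n := Nat.find hex
      obtain ⟨hn, hadjn⟩ := Nat.find_spec hex
      have hemem : s(v, l.get ⟨n, hn⟩) ∈ Msigma G l := by
        refine ⟨⟨n, hn⟩, v, rfl, hadjn, ?_⟩
        intro j hj hadjj
        exact Nat.find_min hex hj ⟨j.2, by simpa using hadjj⟩
      obtain ⟨y, i, heq, hyI, hfy⟩ := hMσ _ hemem
      have : y = v := by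
        have := heq
        rw [Sym2.eq_iff] at this
        rcases this with ⟨h1, h2⟩ | ⟨h1, h2⟩
        · exact h1.symm
        · exact absurd (hgetI i) (h1 ▸ hv)
      exact ⟨_, hemem, by rw [hfy, this]⟩
  have hcard : (Msigma G l).ncard = (Iᶜ).ncard := by
    rw [← himg, Set.ncard_image_of_injOn (hinj _ hmatch)]
  refine ⟨hmatch, ?_⟩
  intro M' hM'
  calc M'.ncard = (f '' M').ncard := (Set.ncard_image_of_injOn (hinj _ hM')).symm
    _ ≤ (Iᶜ).ncard := by
        apply Set.ncard_le_ncard _ (Set.toFinite _)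
        rintro _ ⟨e, he, rfl⟩
        exact (hfspec e (hedge e (hM'.1 he))).2
    _ = (Msigma G l).ncard := hcard.symm
end

section
/- Let G be a bipartite graph and let I be a maximum independent set in G with an accessibility ordering σ. Then the matching M^σ is a uniquely restricted maximum matching in G; in particular G contains no M^σ-alternating cycle. -/
variable {V : Type*}

section URAux

variable {V : Type*}


lemma ur_mem_of_getLast? {α : Type*} {L : List α} {x : α} (h : L.getLast? = some x) : x ∈ L := by
  rw [← List.head?_reverse] at h
  exact List.mem_reverse.mp (List.mem_of_mem_head? (Option.mem_def.mpr h))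

lemma ur_edge_eq {G : SimpleGraph V} {e : Sym2 V} {u : V} (he : e ∈ G.edgeSet)
    (hu : u ∈ e) : ∃ z, e = s(u, z) ∧ G.Adj u z := by
  refine ⟨Sym2.Mem.other hu, (Sym2.other_spec hu).symm, ?_⟩
  rw [← SimpleGraph.mem_edgeSet, Sym2.other_spec hu]
  exact he

lemma ur_edge_repr {G : SimpleGraph V} {e : Sym2 V} (he : e ∈ G.edgeSet) :
    ∃ a b, e = s(a, b) ∧ G.Adj a b := by
  induction e using Sym2.ind with
  | _ a b => exact ⟨a, b, rfl, he⟩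

lemma ur_first_edge {G : SimpleGraph V} {a b : V} (p : G.Walk a b) (hp : ¬ p.Nil) :
    ∃ e, p.edges.head? = some e ∧ a ∈ e := by
  obtain ⟨u, h, q, rfl⟩ := SimpleGraph.Walk.not_nil_iff.mp hp
  exact ⟨s(a, u), by simp, Sym2.mem_mk_left a u⟩

lemma ur_last_edge {G : SimpleGraph V} {a b : V} (p : G.Walk a b) (hp : ¬ p.Nil) :
    ∃ e, p.edges.getLast? = some e ∧ b ∈ e := by
  have hpr : ¬ p.reverse.Nil := by
    rw [SimpleGraph.Walk.not_nil_iff_lt_length] at hp ⊢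
    simpa using hp
  obtain ⟨e, he, hbe⟩ := ur_first_edge p.reverse hpr
  refine ⟨e, ?_, hbe⟩
  rwa [SimpleGraph.Walk.edges_reverse, List.head?_reverse] at he

lemma ur_junction {α : Type*} {R : α → α → Prop} {L : List α}
    (h : (L ++ L.take 1).Chain' R) {x y : α}
    (hx : L.getLast? = some x) (hy : L.head? = some y) : R x y := by
  cases L with
  | nil => simp at hy
  | cons a t =>
    have hy' : a = y := by simpa using hy
    subst hy'
    exact (List.isChain_append.mp h).2.2 x (Option.mem_def.mpr hx) a (by simp)

/-- At each support vertex of an alternating cycle there is an incident cycle edge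
in `M` and one not in `M`. -/
lemma ur_pair {G : SimpleGraph V} {M : Set (Sym2 V)} {v : V} {c : G.Walk v v}
    (hc : c.IsCycle) (hch : (c.edges ++ c.edges.take 1).Chain' (fun e f => e ∈ M ↔ f ∉ M))
    {u : V} (hu : u ∈ c.support) :
    ∃ e f, e ∈ c.edges ∧ f ∈ c.edges ∧ u ∈ e ∧ u ∈ f ∧ e ∈ M ∧ f ∉ M := by
  classical
  have key : ∃ e f, e ∈ c.edges ∧ f ∈ c.edges ∧ u ∈ e ∧ u ∈ f ∧ (e ∈ M ↔ f ∉ M) := by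
    by_cases huv : u = v
    · subst huv
      have hnil := hc.not_nil
      obtain ⟨e0, he0, hv0⟩ := ur_first_edge c hnil
      obtain ⟨eL, heL, hvL⟩ := ur_last_edge c hnil
      exact ⟨eL, e0, ur_mem_of_getLast? heL, List.mem_of_mem_head? (Option.mem_def.mpr he0),
        hvL, hv0, ur_junction hch heL he0⟩
    · have hpq := c.take_spec hu
      have hce : c.edges = (c.takeUntil u hu).edges ++ (c.dropUntil u hu).edges := by
        conv_lhs => rw [← hpq]
        rw [SimpleGraph.Walk.edges_append]
      have hp : ¬ (c.takeUntil u hu).Nil := SimpleGraph.Walk.not_nil_of_ne (Ne.symm huv)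
      have hq : ¬ (c.dropUntil u hu).Nil := SimpleGraph.Walk.not_nil_of_ne huv
      obtain ⟨eL, heL, huL⟩ := ur_last_edge _ hp
      obtain ⟨e0, he0, hu0⟩ := ur_first_edge _ hq
      rw [hce] at hch
      have hch2 := (List.isChain_append.mp hch).1
      have hR := (List.isChain_append.mp hch2).2.2 eL (Option.mem_def.mpr heL)
        e0 (Option.mem_def.mpr he0)
      refine ⟨eL, e0, ?_, ?_, huL, hu0, hR⟩
      · rw [hce, List.mem_append]; exact Or.inl (ur_mem_of_getLast? heL)
      · rw [hce, List.mem_append]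
        exact Or.inr (List.mem_of_mem_head? (Option.mem_def.mpr he0))
  obtain ⟨e, f, heC, hfC, hue, huf, hiff⟩ := key
  by_cases he : e ∈ M
  · exact ⟨e, f, heC, hfC, hue, huf, he, hiff.mp he⟩
  · have hf : f ∈ M := by
      by_contra hf
      exact he (hiff.mpr hf)
    exact ⟨f, e, hfC, heC, huf, hue, hf, he⟩

lemma ur_msig_min {G : SimpleGraph V} {l : List V} {u : V} {j : Fin l.length}
    (h : G.Adj (l.get j) u) :
    ∃ i : Fin l.length, s(u, l.get i) ∈ Msigma G l ∧ (i : ℕ) ≤ (j : ℕ) := by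
  classical
  set S : Finset (Fin l.length) := Finset.univ.filter (fun k => G.Adj (l.get k) u) with hS
  have hjS : j ∈ S := by
    simp only [hS, Finset.mem_filter, Finset.mem_univ, true_and]
    exact h
  have hne : S.Nonempty := ⟨j, hjS⟩
  refine ⟨S.min' hne, ⟨S.min' hne, u, rfl, ?_, ?_⟩, Finset.min'_le S j hjS⟩
  · have h1 := S.min'_mem hne
    simp only [hS, Finset.mem_filter, Finset.mem_univ, true_and] at h1
    exact h1
  · intro k hk hadj
    have h2 : S.min' hne ≤ k := Finset.min'_le S k
      (by simp only [hS, Finset.mem_filter, Finset.mem_univ, true_and]; exact hadj)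
    have h3 := Fin.le_def.mp h2
    omega

end URAux

/-- `Mσ` is a uniquely restricted maximum matching; in particular there is no
`Mσ`-alternating cycle. -/
theorem stmt3 [Fintype V] (G : SimpleGraph V) (A B : Set V) (hbip : IsBipartition G A B)
    (I : Set V) (hI : IsMaximumIndepSet G I)
    (l : List V) (hl : IsAccessibilityOrdering G I l) :
    IsMaximumMatching G (Msigma G l) ∧ UniquelyRestricted G (Msigma G l) ∧
      ¬ ∃ (v : V) (c : G.Walk v v), IsAlternatingCycle G (Msigma G l) c := by
  classical
  obtain ⟨hnd, hIl, hM⟩ := hl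
  obtain ⟨hInd, hImax⟩ := hI
  have hgetI : ∀ i : Fin l.length, l.get i ∈ I := by
    intro i
    rw [← hIl]
    exact List.get_mem l i
  have hyNotI : ∀ {x y : V}, x ∈ I → G.Adj x y → y ∉ I := by
    intro x y hx hadj hy
    exact hInd x hx y hy hadj
  have hMvert : ∀ e ∈ Msigma G l, ∃ (i : Fin l.length) (y : V),
      e = s(y, l.get i) ∧ G.Adj (l.get i) y ∧ y ∉ I := by
    intro e he
    obtain ⟨i, y, rfl, hadj, -⟩ := he
    exact ⟨i, y, rfl, hadj, hyNotI (hgetI i) hadj⟩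
  have hMuniq : ∀ e ∈ Msigma G l, ∀ f ∈ Msigma G l, ∀ x : V, x ∈ e → x ∈ f → e = f := by
    intro e he f hf x hxe hxf
    by_contra hne
    exact hM.2 e he f hf hne x hxe hxf
  have hnbr : ∀ u, u ∉ I → ∃ j : Fin l.length, G.Adj (l.get j) u := by
    intro u hu
    by_contra hcon
    push_neg at hcon
    have hJ : IsIndepSet G (insert u I) := by
      intro a ha b hb hadj
      rcases ha with rfl | ha
      · rcases hb with rfl | hb
        · exact G.loopless.irrefl _ hadj
        · have hbl : b ∈ {v | v ∈ l} := by rw [hIl]; exact hb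
          obtain ⟨j, hj⟩ := List.get_of_mem hbl
          exact hcon j (hj ▸ hadj.symm)
      · rcases hb with rfl | hb
        · have hal : a ∈ {v | v ∈ l} := by rw [hIl]; exact ha
          obtain ⟨j, hj⟩ := List.get_of_mem hal
          exact hcon j (hj ▸ hadj)
        · exact hInd a ha b hb hadj
    have hle := hImax _ hJ
    rw [Set.ncard_insert_of_notMem hu (Set.toFinite I)] at hle
    omega
  have hedgeAt : ∀ u, u ∉ I → ∃ i : Fin l.length, s(u, l.get i) ∈ Msigma G l := by
    intro u hu
    obtain ⟨j, hj⟩ := hnbr u hu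
    obtain ⟨i, hi, -⟩ := ur_msig_min hj
    exact ⟨i, hi⟩
  have hendp : ∀ {M' : Set (Sym2 V)}, IsMatchingSet G M' → ∀ e ∈ M', ∃ u, u ∈ e ∧ u ∉ I := by
    intro M' hM' e he
    obtain ⟨a, b, rfl, hadj⟩ := ur_edge_repr (hM'.1 he)
    by_cases ha : a ∈ I
    · exact ⟨b, Sym2.mem_mk_right a b, hyNotI ha hadj⟩
    · exact ⟨a, Sym2.mem_mk_left a b, ha⟩
  refine ⟨⟨hM, ?_⟩, ?_, ?_⟩
  · -- maximum matching
    intro M' hM'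
    have hcl : ∀ e ∈ M', ∃ f, f ∈ Msigma G l ∧ ∃ u, u ∈ e ∧ u ∈ f ∧ u ∉ I := by
      intro e he
      obtain ⟨u, hue, huI⟩ := hendp hM' e he
      obtain ⟨i, hi⟩ := hedgeAt u huI
      exact ⟨s(u, l.get i), hi, u, hue, Sym2.mem_mk_left _ _, huI⟩
    have hcl' : ∀ e : Sym2 V, ∃ f, e ∈ M' →
        f ∈ Msigma G l ∧ ∃ u, u ∈ e ∧ u ∈ f ∧ u ∉ I := by
      intro e
      by_cases he : e ∈ M'
      · obtain ⟨f, hf⟩ := hcl e he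
        exact ⟨f, fun _ => hf⟩
      · exact ⟨e, fun h => absurd h he⟩
    choose φ hφ using hcl'
    apply Set.ncard_le_ncard_of_injOn φ (fun e he => (hφ e he).1) ?_ (Set.toFinite _)
    intro e1 h1 e2 h2 heq
    obtain ⟨u1, hu1e, hu1f, hu1I⟩ := (hφ e1 h1).2
    obtain ⟨u2, hu2e, hu2f, hu2I⟩ := (hφ e2 h2).2
    obtain ⟨i, y, hshape, hadj, hyI⟩ := hMvert _ (hφ e1 h1).1
    have hu1y : u1 = y := by
      rw [hshape, Sym2.mem_iff] at hu1f
      rcases hu1f with h | h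
      · exact h
      · exact absurd (h ▸ hgetI i) hu1I
    have hu2y : u2 = y := by
      rw [← heq, hshape, Sym2.mem_iff] at hu2f
      rcases hu2f with h | h
      · exact h
      · exact absurd (h ▸ hgetI i) hu2I
    have h12 : u1 = u2 := hu1y.trans hu2y.symm
    by_contra hne
    rw [h12] at hu1e
    exact hM'.2 e1 h1 e2 h2 hne u2 hu1e hu2e
  · -- uniquely restricted
    intro M' hM' hVeq
    have hdesc : ∀ (k : Fin l.length) (y : V),
        s(y, l.get k) ∈ M' → s(y, l.get k) ∉ Msigma G l →
        ∃ k' : Fin l.length, (k' : ℕ) < (k : ℕ) ∧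
          ∃ z, s(z, l.get k') ∈ M' ∧ s(z, l.get k') ∉ Msigma G l := by
      intro k y hkM' hkM
      have hadj : G.Adj y (l.get k) := hM'.1 hkM'
      obtain ⟨j, hjM, hjk⟩ := ur_msig_min hadj.symm
      have hjne : (j : ℕ) ≠ (k : ℕ) := by
        intro h
        have : j = k := Fin.ext h
        subst this
        exact hkM hjM
      have hjlt : (j : ℕ) < (k : ℕ) := lt_of_le_of_ne hjk hjne
      have hjM' : s(y, l.get j) ∉ M' := by
        intro hmem
        have hne : s(y, l.get j) ≠ s(y, l.get k) := by
          intro h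
          exact hjne (congrArg Fin.val ((hnd.get_inj_iff).mp (Sym2.congr_right.mp h)))
        exact hM'.2 _ hmem _ hkM' hne y (Sym2.mem_mk_left _ _) (Sym2.mem_mk_left _ _)
      have hjcov : l.get j ∈ matVerts M' := by
        rw [hVeq]
        exact ⟨s(y, l.get j), hjM, Sym2.mem_mk_right _ _⟩
      obtain ⟨f, hfM', hjf⟩ := hjcov
      have hfM : f ∉ Msigma G l := by
        intro hfM
        have : f = s(y, l.get j) := hMuniq f hfM _ hjM _ hjf (Sym2.mem_mk_right _ _)
        rw [this] at hfM'
        exact hjM' hfM'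
      obtain ⟨z, hfz, -⟩ := ur_edge_eq (hM'.1 hfM') hjf
      refine ⟨j, hjlt, z, ?_, ?_⟩
      · rwa [Sym2.eq_swap, ← hfz]
      · rw [Sym2.eq_swap, ← hfz]; exact hfM
    have hsub : M' ⊆ Msigma G l := by
      by_contra hns
      obtain ⟨e, heM', heM⟩ := Set.not_subset.mp hns
      have hSne : ∃ k : Fin l.length, ∃ z, s(z, l.get k) ∈ M' ∧ s(z, l.get k) ∉ Msigma G l := by
        obtain ⟨a, b, rfl, hadj⟩ := ur_edge_repr (hM'.1 heM')
        by_cases ha : a ∈ I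
        · have hal : a ∈ {v | v ∈ l} := by rw [hIl]; exact ha
          obtain ⟨j, hj⟩ := List.get_of_mem hal
          refine ⟨j, b, ?_, ?_⟩
          · rwa [hj, Sym2.eq_swap]
          · rw [hj, Sym2.eq_swap]; exact heM
        · by_cases hb : b ∈ I
          · have hbl : b ∈ {v | v ∈ l} := by rw [hIl]; exact hb
            obtain ⟨j, hj⟩ := List.get_of_mem hbl
            refine ⟨j, a, ?_, ?_⟩
            · rwa [hj]
            · rw [hj]; exact heM
          · -- both endpoints outside I
            have hacov : a ∈ matVerts (Msigma G l) := by
              rw [← hVeq]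
              exact ⟨s(a, b), heM', Sym2.mem_mk_left _ _⟩
            obtain ⟨g, hgM, hag⟩ := hacov
            obtain ⟨i, y, hgeq, hgadj, hyI⟩ := hMvert g hgM
            have hay : a = y := by
              rw [hgeq, Sym2.mem_iff] at hag
              rcases hag with h | h
              · exact h
              · exact absurd (h ▸ hgetI i) ha
            subst hay
            have hgM' : g ∉ M' := by
              intro hgm
              have hne : s(a, b) ≠ g := by
                intro h
                rw [← h] at hgM
                exact heM hgM
              exact hM'.2 _ heM' _ hgm hne a (Sym2.mem_mk_left _ _)
                (hgeq ▸ Sym2.mem_mk_left _ _)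
            have hicov : l.get i ∈ matVerts M' := by
              rw [hVeq]
              exact ⟨g, hgM, hgeq ▸ Sym2.mem_mk_right _ _⟩
            obtain ⟨f, hfM', hif⟩ := hicov
            have hfM : f ∉ Msigma G l := by
              intro hfm
              have : f = g := hMuniq f hfm g hgM _ hif (hgeq ▸ Sym2.mem_mk_right _ _)
              rw [this] at hfM'
              exact hgM' hfM'
            obtain ⟨z, hfz, -⟩ := ur_edge_eq (hM'.1 hfM') hif
            refine ⟨i, z, ?_, ?_⟩
            · rwa [Sym2.eq_swap, ← hfz]
            · rw [Sym2.eq_swap, ← hfz]; exact hfM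
      obtain ⟨k0, z0, hz0⟩ := hSne
      set S : Finset (Fin l.length) :=
        Finset.univ.filter (fun k => ∃ z, s(z, l.get k) ∈ M' ∧ s(z, l.get k) ∉ Msigma G l)
        with hS
      have hk0S : k0 ∈ S := by simp only [hS, Finset.mem_filter, Finset.mem_univ, true_and]; exact ⟨z0, hz0⟩
      have hne : S.Nonempty := ⟨k0, hk0S⟩
      obtain ⟨y, hyM', hyM⟩ : ∃ z, s(z, l.get (S.min' hne)) ∈ M' ∧
          s(z, l.get (S.min' hne)) ∉ Msigma G l := by
        have h1 := S.min'_mem hne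
        simp only [hS, Finset.mem_filter, Finset.mem_univ, true_and] at h1
        exact h1
      obtain ⟨k', hk'lt, z, hz1, hz2⟩ := hdesc _ y hyM' hyM
      have hk'S : k' ∈ S := by
        simp only [hS, Finset.mem_filter, Finset.mem_univ, true_and]
        exact ⟨z, hz1, hz2⟩
      have := Fin.le_def.mp (Finset.min'_le S k' hk'S)
      omega
    apply Set.Subset.antisymm hsub
    intro e heM
    obtain ⟨i, y, hshape, hadj, hyI⟩ := hMvert e heM
    have hycov : y ∈ matVerts M' := by
      rw [hVeq]
      exact ⟨e, heM, hshape ▸ Sym2.mem_mk_left _ _⟩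
    obtain ⟨f, hfM', hyf⟩ := hycov
    have : f = e := hMuniq f (hsub hfM') e heM y hyf (hshape ▸ Sym2.mem_mk_left _ _)
    rwa [← this]
  · -- no alternating cycle
    rintro ⟨v, c, hcyc, hch⟩
    set S : Finset (Fin l.length) := Finset.univ.filter (fun i => l.get i ∈ c.support) with hS
    have hSne : S.Nonempty := by
      obtain ⟨e, f, heC, hfC, hve, hvf, heM, hfM⟩ := ur_pair hcyc hch c.start_mem_support
      obtain ⟨k, y, hkeq, -, -⟩ := heM
      refine ⟨k, ?_⟩
      simp only [hS, Finset.mem_filter, Finset.mem_univ, true_and]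
      exact c.snd_mem_support_of_mem_edges (hkeq ▸ heC)
    have hisup : l.get (S.min' hSne) ∈ c.support := by
      have h1 := S.min'_mem hSne
      simp only [hS, Finset.mem_filter, Finset.mem_univ, true_and] at h1
      exact h1
    obtain ⟨e, f, heC, hfC, hue, huf, heM, hfM⟩ := ur_pair hcyc hch hisup
    obtain ⟨z, hfz, hadjuz⟩ := ur_edge_eq (c.edges_subset_edgeSet hfC) huf
    have hzsup : z ∈ c.support := c.snd_mem_support_of_mem_edges (hfz ▸ hfC)
    obtain ⟨g, g', hgC, -, hzg, -, hgM, -⟩ := ur_pair hcyc hch hzsup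
    have hgMc := hgM
    obtain ⟨k, y, hgeq, hgadj, hmin⟩ := hgM
    have hzI : z ∉ I := hyNotI (hgetI (S.min' hSne)) hadjuz
    have hzy : z = y := by
      rw [hgeq, Sym2.mem_iff] at hzg
      rcases hzg with h | h
      · exact h
      · exact absurd (h ▸ hgetI k) hzI
    rw [hzy] at hadjuz hfz
    have hki : ¬ ((S.min' hSne : ℕ) < (k : ℕ)) := fun h => hmin _ h hadjuz
    have hkne : (k : ℕ) ≠ ((S.min' hSne : ℕ)) := by
      intro h
      apply hfM
      have hk : k = S.min' hSne := Fin.ext h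
      rw [hfz, Sym2.eq_swap, ← hk, ← hgeq]
      exact hgMc
    have hkS : k ∈ S := by
      simp only [hS, Finset.mem_filter, Finset.mem_univ, true_and]
      exact c.snd_mem_support_of_mem_edges (hgeq ▸ hgC)
    have := Fin.le_def.mp (Finset.min'_le S k hkS)
    omega
end

section
/- Let G be a bipartite graph and E a set of edges of G. If G has a uniquely restricted maximum matching M with M ⊆ E, then every maximum independent set I in G admits an E-good accessibility ordering, i.e., an accessibility ordering σ of I with M^σ ⊆ E. -/
variable {V : Type*}

section helpers
variable {α : Type*} {r r' : α → α → Prop}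

lemma getLast_suffix (c : α) (l₁ : List α) (a : α) (l₂ : List α) :
    (c :: (l₁ ++ a :: l₂)).getLast (by simp) = (a :: l₂).getLast (by simp) := by
  have h2 : ((c :: l₁) ++ (a :: l₂)).getLast (by simp) = (a :: l₂).getLast (by simp) := by
    rw [List.getLast_append]; simp
  rw [← h2]
  exact List.getLast_congr _ _ (by simp)

lemma nodup_chain_of_reflTransGen {a b : α} (h : Relation.ReflTransGen r a b) :
    ∃ l : List α, List.Chain r a l ∧ (a :: l).getLast (by simp) = b ∧ (a :: l).Nodup := by
  induction h using Relation.ReflTransGen.head_induction_on with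
  | refl => exact ⟨[], List.Chain.nil, rfl, List.nodup_singleton b⟩
  | @head x c hxc hcb ih =>
    obtain ⟨l, hch, hlast, hnd⟩ := ih
    by_cases hmem : x ∈ c :: l
    · rcases List.append_of_mem hmem with ⟨s, t, hst⟩
      rcases s with _ | ⟨c', s'⟩
      · -- s = [], so x = c
        simp only [List.nil_append, List.cons.injEq] at hst
        obtain ⟨rfl, rfl⟩ := hst
        exact ⟨l, hch, hlast, hnd⟩
      · simp only [List.cons_append, List.cons.injEq] at hst
        obtain ⟨hc, hl⟩ := hst
        subst hl
        have hch2 : List.Chain r x t := (List.isChain_cons_split.mp hch).2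
        refine ⟨t, hch2, ?_, ?_⟩
        · rw [← hlast]; exact (getLast_suffix c s' x t).symm
        · exact hnd.sublist (by
            have : x :: t <:+ c :: (s' ++ x :: t) := ⟨c :: s', by simp⟩
            exact this.sublist)
    · exact ⟨c :: l, List.chain_cons.mpr ⟨hxc, hch⟩, by
        rw [List.getLast_cons (by simp : c :: l ≠ [])]; exact hlast,
        List.nodup_cons.mpr ⟨hmem, hnd⟩⟩

lemma chain_imp_mem : ∀ {a : α} {l : List α}, List.Chain r a l →
    (∀ u v, u ∈ a :: l → v ∈ a :: l → r u v → r' u v) → List.Chain r' a l := by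
  intro a l
  induction l generalizing a with
  | nil => intro _ _; exact List.Chain.nil
  | cons c l ih =>
    intro hch himp
    simp only [List.Chain, List.isChain_cons_cons] at hch ⊢
    exact ⟨himp a c (by simp) (by simp) hch.1,
      ih hch.2 fun u v hu hv => himp u v (by simp at hu ⊢; tauto) (by simp at hv ⊢; tauto)⟩

lemma topo_sort [Fintype α] (T : α → α → Prop) (hacyc : ∀ v, ¬ Relation.TransGen T v v)
    (s : Finset α) : ∃ l : List α, l.Nodup ∧ (∀ v, v ∈ l ↔ v ∈ s) ∧
      List.Pairwise (fun x y => ¬ T y x) l := by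
  classical
  haveI : IsTrans α (Relation.TransGen T) := ⟨fun _ _ _ h h' => h.trans h'⟩
  haveI : IsIrrefl α (Relation.TransGen T) := ⟨hacyc⟩
  have wf : WellFounded (Relation.TransGen T) :=
    Finite.wellFounded_of_trans_of_irrefl _
  induction s using Finset.strongInduction with
  | _ s ih =>
    rcases s.eq_empty_or_nonempty with rfl | hne
    · exact ⟨[], List.nodup_nil, by simp, List.Pairwise.nil⟩
    · obtain ⟨x, hx, hmin⟩ := wf.has_min ↑s (by exact_mod_cast hne)
      obtain ⟨l, hnd, hmem, hpw⟩ := ih (s.erase x) (Finset.erase_ssubset hx)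
      refine ⟨x :: l, List.nodup_cons.mpr ⟨fun hc => by
          have := (hmem x).mp hc; simp at this, hnd⟩, ?_, ?_⟩
      · intro v
        simp only [List.mem_cons, hmem, Finset.mem_erase]
        constructor
        · rintro (rfl | ⟨_, h⟩) <;> [exact hx; exact h]
        · intro hv
          by_cases hvx : v = x
          · exact Or.inl hvx
          · exact Or.inr ⟨hvx, hv⟩
      · refine List.pairwise_cons.mpr ⟨fun y hy hT => ?_, hpw⟩
        have : y ∈ s := (Finset.mem_erase.mp ((hmem y).mp hy)).2
        exact hmin y this (Relation.TransGen.single hT)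

end helpers

section aug
set_option linter.unusedSectionVars false
variable [Fintype V] {G : SimpleGraph V} {A B : Set V}

lemma matching_insert {M : Set (Sym2 V)} (hMm : IsMatchingSet G M) {a b : V}
    (hadj : G.Adj a b) (ha : a ∉ matVerts M) (hb : b ∉ matVerts M) :
    IsMatchingSet G (insert s(a, b) M) := by
  constructor
  · exact Set.insert_subset (G.mem_edgeSet.mpr hadj) hMm.1
  · rintro e (rfl | he) f (rfl | hf) hne v hv hv'
    · exact hne rfl
    · rcases Sym2.mem_iff.mp hv with rfl | rfl
      · exact ha ⟨f, hf, hv'⟩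
      · exact hb ⟨f, hf, hv'⟩
    · rcases Sym2.mem_iff.mp hv' with rfl | rfl
      · exact ha ⟨e, he, hv⟩
      · exact hb ⟨e, he, hv⟩
    · exact hMm.2 e he f hf hne v hv hv'

lemma aug_no_path (hbip : IsBipartition G A B) :
    ∀ (n : ℕ) (M : Set (Sym2 V)), IsMaximumMatching G M → ∀ (a b : V) (l : List V),
    l.length ≤ n → a ∈ A → b ∈ B → a ∉ matVerts M → b ∉ matVerts M →
    List.Chain (DMarc G A B M) a l → (a :: l).getLast (by simp) = b → (a :: l).Nodup → False := by
  obtain ⟨hABd, hABu, hadjAB⟩ := hbip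
  intro n
  induction n with
  | zero =>
    intro M hM a b l hlen ha hb _ _ _ hlast _
    rw [Nat.le_zero, List.length_eq_zero_iff] at hlen; subst hlen
    simp only [List.getLast_singleton] at hlast; subst hlast
    exact Set.disjoint_left.mp hABd ha hb
  | succ n ih =>
    intro M hM a b l hlen ha hb ham hbm hch hlast hnd
    match l with
    | [] =>
      simp only [List.getLast_singleton] at hlast; subst hlast
      exact Set.disjoint_left.mp hABd ha hb
    | [b₁] =>
      have hbb : b₁ = b := by simpa using hlast
      have harc : DMarc G A B M a b₁ := (List.chain_cons.mp hch).1
      obtain ⟨hadj, hcase⟩ := harc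
      rcases hcase with ⟨_, hbB, hnM⟩ | ⟨haB, _, _⟩
      · have hmax := hM.2 (insert s(a, b₁) M)
          (matching_insert hM.1 hadj ham (by rw [hbb]; exact hbm))
        rw [Set.ncard_insert_of_notMem hnM (Set.toFinite M)] at hmax
        omega
      · exact Set.disjoint_left.mp hABd ha haB
    | b₁ :: a₁ :: l' =>
      replace hch := List.isChain_cons_cons.mp hch
      obtain ⟨harc1, hch⟩ := hch
      replace hch := List.isChain_cons_cons.mp hch
      obtain ⟨harc2, hch⟩ := hch
      have hb₁B : b₁ ∈ B ∧ s(a, b₁) ∉ M := by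
        rcases harc1.2 with ⟨_, h1, h2⟩ | ⟨haB, _, _⟩
        · exact ⟨h1, h2⟩
        · exact absurd haB (Set.disjoint_left.mp hABd ha)
      have ha₁A : a₁ ∈ A ∧ s(b₁, a₁) ∈ M := by
        rcases harc2.2 with ⟨hb₁A, _, _⟩ | ⟨_, h1, h2⟩
        · exact absurd hb₁A (Set.disjoint_right.mp hABd hb₁B.1)
        · exact ⟨h1, h2⟩
      have hf : s(a₁, b₁) ∈ M := by rw [Sym2.eq_swap]; exact ha₁A.2
      have hna : a ∉ b₁ :: a₁ :: l' := (List.nodup_cons.mp hnd).1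
      have hnd2 := (List.nodup_cons.mp hnd).2
      have hnb₁ : b₁ ∉ a₁ :: l' := (List.nodup_cons.mp hnd2).1
      have hnd3 : (a₁ :: l').Nodup := (List.nodup_cons.mp hnd2).2
      set f := s(a₁, b₁) with hfdef
      set e := s(a, b₁) with hedef
      set M₁ := (M \ {f}) ∪ {e} with hM₁def
      have heM : e ∉ M := hb₁B.2
      have hefne : e ≠ f := fun h => heM (h ▸ hf)
      have hb₁f : b₁ ∈ f := by rw [hfdef]; simp
      have ha₁f : a₁ ∈ f := by rw [hfdef]; simp
      have hae : a ∈ e := by rw [hedef]; simp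
      have hb₁e : b₁ ∈ e := by rw [hedef]; simp
      -- M₁ is a matching
      have hM₁m : IsMatchingSet G M₁ := by
        constructor
        · rintro e' (he' | he')
          · exact hM.1.1 he'.1
          · rcases he' with rfl
            exact G.mem_edgeSet.mpr harc1.1
        · rintro e' (he' | he'') f' (hf' | hf'') hne v hv hv'
          · exact hM.1.2 e' he'.1 f' hf'.1 hne v hv hv'
          · rcases hf'' with rfl
            rcases Sym2.mem_iff.mp hv' with rfl | rfl
            · exact ham ⟨e', he'.1, hv⟩
            · exact hM.1.2 e' he'.1 f hf (fun h => he'.2 (by simp [h])) v hv hb₁f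
          · rcases he'' with rfl
            rcases Sym2.mem_iff.mp hv with rfl | rfl
            · exact ham ⟨f', hf'.1, hv'⟩
            · exact hM.1.2 f' hf'.1 f hf (fun h => hf'.2 (by simp [h])) v hv' hb₁f
          · rcases he'' with rfl; rcases hf'' with rfl; exact hne rfl
      -- cardinality
      have hMfin := Set.toFinite M
      have hcard : M₁.ncard = M.ncard := by
        have h1 : M₁ = insert e (M \ {f}) := by
          rw [hM₁def]; rw [Set.union_singleton]
        have h2 : e ∉ M \ {f} := fun h => heM h.1
        have h3 : 1 ≤ M.ncard := (Set.ncard_pos hMfin).mpr ⟨f, hf⟩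
        rw [h1, Set.ncard_insert_of_notMem h2 (hMfin.diff),
          Set.ncard_diff_singleton_of_mem hf]
        omega
      have hM₁max : IsMaximumMatching G M₁ :=
        ⟨hM₁m, fun M'' hM'' => hcard ▸ hM.2 M'' hM''⟩
      -- a₁ unmatched in M₁
      have ha₁m : a₁ ∉ matVerts M₁ := by
        rintro ⟨e', he', hv⟩
        rcases he' with he' | he''
        · exact he'.2 (by
            have : e' = f := by
              by_contra hne'
              exact hM.1.2 e' he'.1 f hf hne' a₁ hv ha₁f
            simp [this])
        · rcases he'' with rfl
          rcases Sym2.mem_iff.mp hv with h | h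
          · exact hna (h ▸ List.mem_cons_of_mem _ List.mem_cons_self)
          · exact hnb₁ (h ▸ List.mem_cons_self)
      -- b unmatched in M₁
      have hbm₁ : b ∉ matVerts M₁ := by
        rintro ⟨e', he', hv⟩
        rcases he' with he' | he''
        · exact hbm ⟨e', he'.1, hv⟩
        · rcases he'' with rfl
          rcases Sym2.mem_iff.mp hv with rfl | rfl
          · exact Set.disjoint_left.mp hABd ha hb
          · exact hbm ⟨f, hf, hb₁f⟩
      -- chain transfer
      have hch₁ : List.Chain (DMarc G A B M₁) a₁ l' := by
        refine chain_imp_mem hch fun u v hu hv harc => ?_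
        have hub : s(u, v) ≠ f := by
          intro h
          have : b₁ ∈ s(u, v) := h ▸ hb₁f
          rcases Sym2.mem_iff.mp this with rfl | rfl
          · exact hnb₁ hu
          · exact hnb₁ hv
        have hue : s(u, v) ≠ e := by
          intro h
          have : a ∈ s(u, v) := h ▸ hae
          rcases Sym2.mem_iff.mp this with rfl | rfl
          · exact hna (List.mem_cons_of_mem _ hu)
          · exact hna (List.mem_cons_of_mem _ hv)
        obtain ⟨hadj', hcase'⟩ := harc
        refine ⟨hadj', ?_⟩
        rcases hcase' with ⟨h1, h2, h3⟩ | ⟨h1, h2, h3⟩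
        · exact Or.inl ⟨h1, h2, fun hin => by
            rcases hin with hin | hin
            · exact h3 hin.1
            · exact hue hin⟩
        · exact Or.inr ⟨h1, h2, Or.inl ⟨h3, hub⟩⟩
      -- getLast
      have hlast₁ : (a₁ :: l').getLast (by simp) = b := by
        rw [← hlast, List.getLast_cons (by simp : (b₁ :: a₁ :: l') ≠ []),
          List.getLast_cons (by simp : (a₁ :: l') ≠ [])]
      have ha₁A' : a₁ ∈ A := ha₁A.1
      exact ih M₁ hM₁max a₁ b l' (by simp at hlen; omega) ha₁A' hb ha₁m hbm₁ hch₁ hlast₁ hnd3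
end aug

section flip
set_option linter.unusedSectionVars false
variable [Fintype V] {G : SimpleGraph V}

lemma flip_acyclic (G : SimpleGraph V) (M : Set (Sym2 V)) (hMm : IsMatchingSet G M)
    (hur : UniquelyRestricted G M) (I : Set V) (hInd : IsIndepSet G I) (pa : V → V)
    (hmem : ∀ v ∈ matVerts M, s(v, pa v) ∈ M) (huniq : ∀ v w, s(v, w) ∈ M → pa v = w) :
    ∀ v, ¬ Relation.TransGen (fun x y =>
      (x ∈ I ∧ x ∈ matVerts M) ∧ (y ∈ I ∧ y ∈ matVerts M) ∧ x ≠ y ∧ G.Adj (pa x) y) v v := by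
  set T := fun x y =>
      (x ∈ I ∧ x ∈ matVerts M) ∧ (y ∈ I ∧ y ∈ matVerts M) ∧ x ≠ y ∧ G.Adj (pa x) y with hTdef
  have hinv : ∀ v ∈ matVerts M, pa (pa v) = v := fun v hv => by
    have h := hmem v hv
    rw [Sym2.eq_swap] at h
    exact huniq (pa v) v h
  have hpanotI : ∀ x, x ∈ I → x ∈ matVerts M → pa x ∉ I := fun x hxI hxm hpaI =>
    hInd x hxI (pa x) hpaI (G.mem_edgeSet.mp (hMm.1 (hmem x hxm)))
  intro v hcyc
  obtain ⟨w, hvw, hwv⟩ := Relation.TransGen.tail'_iff.mp hcyc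
  obtain ⟨l, hchain, hlast, hnodup⟩ := nodup_chain_of_reflTransGen hvw
  rcases l with _ | ⟨c, l0⟩
  · simp only [List.getLast_singleton] at hlast
    exact hwv.2.2.1 (hlast ▸ rfl)
  set L : List V := v :: c :: l0 with hLdef
  set k := L.length with hkdef
  have hk2 : 2 ≤ k := by simp [hkdef, hLdef]
  haveI : NeZero k := ⟨by omega⟩
  set u : Fin k → V := L.get with hudef
  have hchain' : L.Chain' T := hchain
  have hone : (1 : Fin k).val = 1 := by
    rw [Fin.val_one']; exact Nat.mod_eq_of_lt (by omega)
  have haddval : ∀ i : Fin k, (i + 1).val = (i.val + 1) % k := fun i => by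
    rw [Fin.add_def, hone]
  have hstep : ∀ i : Fin k, T (u i) (u (i + 1)) := by
    intro i
    by_cases hi : i.val + 1 < k
    · have hv1 : (i + 1).val = i.val + 1 := by rw [haddval]; exact Nat.mod_eq_of_lt hi
      have hthis := List.isChain_iff_getElem.mp hchain' i.val (by omega)
      have e1 : u i = L.get ⟨i.val, by omega⟩ := congrArg L.get (Fin.ext rfl)
      have e2 : u (i + 1) = L.get ⟨i.val + 1, by omega⟩ := congrArg L.get (Fin.ext hv1)
      rw [e1, e2]; exact hthis
    · have hik : i.val = k - 1 := by have := i.2; omega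
      have hv0 : (i + 1).val = 0 := by
        rw [haddval, hik]
        have : k - 1 + 1 = k := by omega
        rw [this, Nat.mod_self]
      have h1 : u i = w := by
        have e1 : u i = L.get ⟨k - 1, by omega⟩ := congrArg L.get (Fin.ext hik)
        rw [e1, ← hlast, List.getLast_eq_getElem]; rfl
      have h2 : u (i + 1) = v := by
        have : u (i + 1) = L.get ⟨0, by omega⟩ := congrArg L.get (Fin.ext hv0)
        rw [this]; rfl
      rw [h1, h2]; exact hwv
  have hCov : ∀ i : Fin k, u i ∈ I ∧ u i ∈ matVerts M := fun i => (hstep i).1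
  have hne : ∀ i : Fin k, u i ≠ u (i + 1) := fun i => (hstep i).2.2.1
  have hadj : ∀ i : Fin k, G.Adj (pa (u i)) (u (i + 1)) := fun i => (hstep i).2.2.2
  have hu_inj : Function.Injective u := List.nodup_iff_injective_get.mp hnodup
  have hM_ui : ∀ i : Fin k, s(u i, pa (u i)) ∈ M := fun i => hmem (u i) (hCov i).2
  have hpam : ∀ i : Fin k, pa (u i) ∈ matVerts M := fun i => ⟨_, hM_ui i, by simp⟩
  have hpa_inj : ∀ i j : Fin k, pa (u i) = pa (u j) → i = j := fun i j h => by
    apply hu_inj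
    rw [← hinv (u i) (hCov i).2, ← hinv (u j) (hCov j).2, h]
  have hpaNI : ∀ i : Fin k, pa (u i) ∉ I := fun i => hpanotI (u i) (hCov i).1 (hCov i).2
  have huv : ∀ i j : Fin k, u i ≠ pa (u j) := fun i j h => hpaNI j (h ▸ (hCov i).1)
  set Fs : Set (Sym2 V) := Set.range (fun i : Fin k => s(u i, pa (u i))) with hFsdef
  set Es : Set (Sym2 V) := Set.range (fun i : Fin k => s(pa (u i), u (i + 1))) with hEsdef
  have hEsnM : ∀ i : Fin k, s(pa (u i), u (i + 1)) ∉ M := by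
    intro i hin
    have h1 : pa (pa (u i)) = u (i + 1) := huniq _ _ hin
    rw [hinv (u i) (hCov i).2] at h1
    exact hne i h1
  set M' := (M \ Fs) ∪ Es with hM'def
  -- cross disjointness: an edge of M \ Fs shares no vertex with an Es-edge
  have hcross : ∀ e' ∈ M \ Fs, ∀ (i : Fin k) (x : V), x ∈ e' → x ∈ s(pa (u i), u (i + 1)) → False := by
    rintro e' ⟨heM, heFs⟩ i x hx hx'
    rcases Sym2.mem_iff.mp hx' with rfl | rfl
    · -- x = pa (u i); its M-edge is s(u i, pa (u i)) ∈ Fs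
      by_cases h : e' = s(u i, pa (u i))
      · exact heFs ⟨i, h.symm⟩
      · exact hMm.2 e' heM _ (hM_ui i) h _ hx (by simp)
    · by_cases h : e' = s(u (i + 1), pa (u (i + 1)))
      · exact heFs ⟨i + 1, h.symm⟩
      · exact hMm.2 e' heM _ (hM_ui (i + 1)) h _ hx (by simp)
  have hM'm : IsMatchingSet G M' := by
    constructor
    · rintro e' (he' | he')
      · exact hMm.1 he'.1
      · obtain ⟨i, rfl⟩ := he'
        exact G.mem_edgeSet.mpr (hadj i)
    · rintro e' (he' | he'') f' (hf' | hf'') hnef x hx hx'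
      · exact hMm.2 e' he'.1 f' hf'.1 hnef x hx hx'
      · obtain ⟨i, rfl⟩ := hf''
        exact hcross e' he' i x hx hx'
      · obtain ⟨i, rfl⟩ := he''
        exact hcross f' hf' i x hx' hx
      · obtain ⟨i, rfl⟩ := he''
        obtain ⟨j, rfl⟩ := hf''
        rcases Sym2.mem_iff.mp hx with rfl | h1 <;> rcases Sym2.mem_iff.mp hx' with h2 | h2
        · exact hnef (by rw [hpa_inj i j h2])
        · exact huv (j + 1) i h2.symm
        · exact huv (i + 1) j (h1.symm ▸ h2)
        · have : i + 1 = j + 1 := hu_inj (h1.symm ▸ h2)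
          exact hnef (by rw [add_right_cancel this])
  have hMV : matVerts M' = matVerts M := by
    ext x
    constructor
    · rintro ⟨e', he', hx⟩
      rcases he' with he' | he''
      · exact ⟨e', he'.1, hx⟩
      · obtain ⟨i, rfl⟩ := he''
        rcases Sym2.mem_iff.mp hx with rfl | rfl
        · exact ⟨_, hM_ui i, by simp⟩
        · exact ⟨_, hM_ui (i + 1), by simp⟩
    · rintro ⟨e', he', hx⟩
      by_cases hFs : e' ∈ Fs
      · obtain ⟨i, rfl⟩ := hFs
        rcases Sym2.mem_iff.mp hx with rfl | rfl
        · refine ⟨s(pa (u (i - 1)), u (i - 1 + 1)), Or.inr ⟨i - 1, rfl⟩, ?_⟩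
          rw [sub_add_cancel]; simp
        · exact ⟨s(pa (u i), u (i + 1)), Or.inr ⟨i, rfl⟩, by simp⟩
      · exact ⟨e', Or.inl ⟨he', hFs⟩, hx⟩
  have hMne : M' ≠ M := by
    intro h
    have : s(pa (u 0), u (0 + 1)) ∈ M' := Or.inr ⟨0, rfl⟩
    exact hEsnM 0 (h ▸ this)
  exact hMne (hur M' hM'm hMV)
end flip

/-- If `G` has a uniquely restricted maximum matching contained in `E`, then every
maximum independent set admits an `E`-good accessibility ordering. -/
theorem stmt4 [Fintype V] (G : SimpleGraph V) (A B : Set V) (hbip : IsBipartition G A B)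
    (E : Set (Sym2 V))
    (M : Set (Sym2 V)) (hM : IsMaximumMatching G M) (hur : UniquelyRestricted G M)
    (hME : M ⊆ E) (I : Set V) (hI : IsMaximumIndepSet G I) :
    ∃ l : List V, IsAccessibilityOrdering G I l ∧ Msigma G l ⊆ E := by
  classical
  obtain ⟨hABd, hABu, hadjAB⟩ := hbip
  have hMm := hM.1
  -- the partner function
  have hpa_ex : ∀ v, v ∈ matVerts M → ∃ w, s(v, w) ∈ M := by
    rintro v ⟨e, he, hve⟩
    obtain ⟨w, rfl⟩ := Sym2.mem_iff_exists.mp hve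
    exact ⟨w, he⟩
  set pa : V → V := fun v => if h : ∃ w, s(v, w) ∈ M then h.choose else v with hpadef
  have hmem : ∀ v ∈ matVerts M, s(v, pa v) ∈ M := by
    intro v hv
    obtain ⟨w, hw⟩ := hpa_ex v hv
    have h : ∃ w', s(v, w') ∈ M := ⟨w, hw⟩
    simp only [hpadef, dif_pos h]
    exact h.choose_spec
  have huniq : ∀ v w, s(v, w) ∈ M → pa v = w := by
    intro v w hw
    have hp : s(v, pa v) ∈ M := hmem v ⟨_, hw, by simp⟩
    by_contra hne
    have hnee : s(v, pa v) ≠ s(v, w) := fun hh => hne (Sym2.congr_right.mp hh)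
    exact hMm.2 _ hp _ hw hnee v (by simp) (by simp)
  -- selection of a non-I endpoint from each matching edge
  have hεP : ∀ e : Sym2 V, ∃ x, x ∈ e ∧ (e ∈ M → x ∉ I) := by
    intro e
    induction e using Sym2.ind with
    | _ x y =>
      by_cases he : s(x, y) ∈ M
      · have hadj : G.Adj x y := G.mem_edgeSet.mp (hMm.1 he)
        by_cases hx : x ∈ I
        · by_cases hy : y ∈ I
          · exact absurd hadj (hI.1 x hx y hy)
          · exact ⟨y, by simp, fun _ => hy⟩
        · exact ⟨x, by simp, fun _ => hx⟩
      · exact ⟨x, by simp, fun h => absurd h he⟩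
  set ε : Sym2 V → V := fun e => (hεP e).choose with hεdef
  have hεmem : ∀ e, ε e ∈ e := fun e => (hεP e).choose_spec.1
  have hεI : ∀ e ∈ M, ε e ∉ I := fun e he => (hεP e).choose_spec.2 he
  have hεinj : Set.InjOn ε M := by
    intro e he f hf hef
    by_contra hne
    exact hMm.2 e he f hf hne (ε e) (hεmem e) (hef ▸ hεmem f)
  have hMle : M.ncard ≤ Iᶜ.ncard :=
    Set.ncard_le_ncard_of_injOn ε (fun e he => hεI e he) hεinj (Set.toFinite _)
  -- the König sets
  set Z := Vplus G A B M with hZdef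
  set J := (A ∩ Z) ∪ (B \ Z) with hJdef
  set K := (A \ Z) ∪ (B ∩ Z) with hKdef
  have hkey : ∀ p q, p ∈ A → p ∈ Z → q ∈ B → q ∉ Z → G.Adj p q → False := by
    intro p q hpA hpZ hqB hqZ hadj
    by_cases hpq : s(p, q) ∈ M
    · obtain ⟨a, haA, ham, hreach⟩ := hpZ
      rcases Relation.ReflTransGen.cases_tail hreach with heq | ⟨w, hw, harc⟩
      · exact ham (heq ▸ ⟨_, hpq, by simp⟩)
      · obtain ⟨hadj', hcase⟩ := harc
        rcases hcase with ⟨hwA, hpB, _⟩ | ⟨hwB, hpA', hwM⟩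
        · exact Set.disjoint_left.mp hABd hpA hpB
        · have heq2 : s(w, p) = s(p, q) := by
            by_contra hne
            exact hMm.2 _ hwM _ hpq hne p (by simp) (by simp)
          have hwq : w = q := by
            rcases Sym2.eq_iff.mp heq2 with ⟨h1, h2⟩ | ⟨h1, _⟩
            · exact absurd h2 hadj.ne
            · exact h1
          exact hqZ ⟨a, haA, ham, hwq ▸ hw⟩
    · obtain ⟨a, haA, ham, hreach⟩ := hpZ
      exact hqZ ⟨a, haA, ham, hreach.tail ⟨hadj, Or.inl ⟨hpA, hqB, hpq⟩⟩⟩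
  have hJind : IsIndepSet G J := by
    intro x hx y hy hadj
    rcases hadjAB hadj with ⟨hxA, hyB⟩ | ⟨hxB, hyA⟩
    · rcases hx with ⟨_, hxZ⟩ | ⟨hxB', _⟩
      · rcases hy with ⟨hyA', _⟩ | ⟨_, hyZ⟩
        · exact Set.disjoint_left.mp hABd hyA' hyB
        · exact hkey x y hxA hxZ hyB hyZ hadj
      · exact Set.disjoint_left.mp hABd hxA hxB'
    · rcases hy with ⟨_, hyZ⟩ | ⟨hyB', _⟩
      · rcases hx with ⟨hxA', _⟩ | ⟨_, hxZ⟩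
        · exact Set.disjoint_left.mp hABd hxA' hxB
        · exact hkey y x hyA hyZ hxB hxZ hadj.symm
      · exact Set.disjoint_left.mp hABd hyA hyB'
  have hKmatch : ∀ v ∈ K, v ∈ matVerts M := by
    rintro v (⟨hvA, hvZ⟩ | ⟨hvB, hvZ⟩)
    · by_contra hm
      exact hvZ ⟨v, hvA, hm, Relation.ReflTransGen.refl⟩
    · by_contra hm
      obtain ⟨a, haA, ham, hreach⟩ := hvZ
      obtain ⟨lp, hch, hlastp, hndp⟩ := nodup_chain_of_reflTransGen hreach
      exact aug_no_path ⟨hABd, hABu, hadjAB⟩ lp.length M hM a v lp le_rfl haA hvB ham hm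
        hch hlastp hndp
  have hKM : K.ncard ≤ M.ncard := by
    apply Set.ncard_le_ncard_of_injOn (fun v => s(v, pa v))
        (fun v hv => hmem v (hKmatch v hv)) ?_ (Set.toFinite _)
    intro x hx y hy hxy
    by_contra hne
    rcases Sym2.eq_iff.mp hxy with ⟨h1, _⟩ | ⟨h1, h2⟩
    · exact hne h1
    · have hedge : s(y, x) ∈ M := by rw [h1]; exact hmem y (hKmatch y hy)
      have hadj : G.Adj y x := G.mem_edgeSet.mp (hMm.1 hedge)
      rcases hadjAB hadj with ⟨hyA, hxB⟩ | ⟨hyB, hxA⟩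
      · have hyZ : y ∉ Z := by
          rcases hy with ⟨_, h⟩ | ⟨hyB', _⟩
          · exact h
          · exact absurd hyB' (Set.disjoint_left.mp hABd hyA)
        have hxZ : x ∈ Z := by
          rcases hx with ⟨hxA', _⟩ | ⟨_, h⟩
          · exact absurd hxA' (Set.disjoint_right.mp hABd hxB)
          · exact h
        obtain ⟨a, haA, ham, hreach⟩ := hxZ
        exact hyZ ⟨a, haA, ham, hreach.tail
          ⟨hadj.symm, Or.inr ⟨hxB, hyA, by rw [Sym2.eq_swap]; exact hedge⟩⟩⟩
      · have hxZ : x ∉ Z := by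
          rcases hx with ⟨_, h⟩ | ⟨hxB', _⟩
          · exact h
          · exact absurd hxB' (Set.disjoint_left.mp hABd hxA)
        have hyZ : y ∈ Z := by
          rcases hy with ⟨hyA', _⟩ | ⟨_, h⟩
          · exact absurd hyA' (Set.disjoint_right.mp hABd hyB)
          · exact h
        obtain ⟨a, haA, ham, hreach⟩ := hyZ
        exact hxZ ⟨a, haA, ham, hreach.tail ⟨hadj, Or.inr ⟨hyB, hxA, hedge⟩⟩⟩
  have hdisjJK : Disjoint J K := by
    rw [Set.disjoint_left]
    rintro v (⟨hvA, hvZ⟩ | ⟨hvB, hvZ⟩) (⟨_, h⟩ | ⟨hvB', _⟩)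
    · exact h hvZ
    · exact Set.disjoint_left.mp hABd hvA hvB'
    · exact Set.disjoint_left.mp hABd (by assumption) hvB
    · exact hvZ (by assumption)
  have hunionJK : J ∪ K = Set.univ := by
    ext v
    simp only [Set.mem_univ, iff_true]
    have hv : v ∈ A ∪ B := hABu ▸ Set.mem_univ v
    by_cases hvZ : v ∈ Z
    · rcases hv with hvA | hvB
      · exact Or.inl (Or.inl ⟨hvA, hvZ⟩)
      · exact Or.inr (Or.inr ⟨hvB, hvZ⟩)
    · rcases hv with hvA | hvB
      · exact Or.inr (Or.inl ⟨hvA, hvZ⟩)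
      · exact Or.inl (Or.inr ⟨hvB, hvZ⟩)
  have hJKcard : J.ncard + K.ncard = Nat.card V := by
    rw [← Set.ncard_union_eq hdisjJK (Set.toFinite _) (Set.toFinite _), hunionJK,
      Set.ncard_univ]
  have hIJ : J.ncard ≤ I.ncard := hI.2 J hJind
  have hIc : I.ncard + Iᶜ.ncard = Nat.card V :=
    Set.ncard_add_ncard_compl I (Set.toFinite _) (Set.toFinite _)
  have hMeq : M.ncard = Iᶜ.ncard := by omega
  have himg : ε '' M = Iᶜ := by
    apply Set.eq_of_subset_of_ncard_le
    · rintro x ⟨e, he, rfl⟩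
      exact hεI e he
    · rw [Set.ncard_image_of_injOn hεinj]
      omega
    · exact Set.toFinite _
  have key : ∀ c, c ∉ I → c ∈ matVerts M ∧ pa c ∈ I := by
    intro c hc
    have hc'' : c ∈ Iᶜ := hc
    rw [← himg] at hc''
    obtain ⟨e, heM, hec⟩ := hc''
    have hcm : c ∈ matVerts M := ⟨e, heM, hec ▸ hεmem e⟩
    refine ⟨hcm, ?_⟩
    by_contra hpc
    have hpc'' : pa c ∈ Iᶜ := hpc
    rw [← himg] at hpc''
    obtain ⟨f, hfM, hfc⟩ := hpc''
    have he0 : s(c, pa c) ∈ M := hmem c hcm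
    have he1 : e = s(c, pa c) := by
      by_contra hne
      exact hMm.2 e heM _ he0 hne c (hec ▸ hεmem e) (by simp)
    have hf1 : f = s(c, pa c) := by
      by_contra hne
      exact hMm.2 f hfM _ he0 hne (pa c) (hfc ▸ hεmem f) (by simp)
    have hef2 : ε e = ε f := by rw [he1, hf1]
    exact (G.mem_edgeSet.mp (hMm.1 he0)).ne (hec.symm.trans (hef2.trans hfc))
  -- the ordering
  have hacyc := flip_acyclic G M hMm hur I hI.1 pa hmem huniq
  obtain ⟨lC, hlCnd, hlCmem, hlCpw⟩ := topo_sort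
    (fun x y => (x ∈ I ∧ x ∈ matVerts M) ∧ (y ∈ I ∧ y ∈ matVerts M) ∧ x ≠ y ∧ G.Adj (pa x) y)
    hacyc (Set.toFinite (I ∩ matVerts M)).toFinset
  have hlCmem' : ∀ v, v ∈ lC ↔ v ∈ I ∧ v ∈ matVerts M := by
    intro v
    rw [hlCmem v, Set.Finite.mem_toFinset]
    rfl
  set lU := (Set.toFinite (I \ matVerts M)).toFinset.toList with hlUdef
  have hlUnd : lU.Nodup := Finset.nodup_toList _
  have hlUmem : ∀ v, v ∈ lU ↔ v ∈ I ∧ v ∉ matVerts M := by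
    intro v
    rw [hlUdef, Finset.mem_toList, Set.Finite.mem_toFinset]
    rfl
  set l := lC ++ lU with hldef
  have hlnd : l.Nodup := List.nodup_append'.mpr
    ⟨hlCnd, hlUnd, fun v hv hv' => ((hlUmem v).mp hv').2 ((hlCmem' v).mp hv).2⟩
  have hlset : {v | v ∈ l} = I := by
    ext v
    simp only [Set.mem_setOf_eq, hldef, List.mem_append, hlCmem', hlUmem]
    constructor
    · rintro (⟨h, _⟩ | ⟨h, _⟩) <;> exact h
    · intro h
      by_cases hm : v ∈ matVerts M
      · exact Or.inl ⟨h, hm⟩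
      · exact Or.inr ⟨h, hm⟩
  have hsub : Msigma G l ⊆ M := by
    rintro e' ⟨i, y, rfl, hadje, hmin⟩
    set x := l.get i with hxdef
    have hxl : x ∈ l := l.get_mem i
    have hxI : x ∈ I := by rw [← hlset]; exact hxl
    have hyI : y ∉ I := fun hyI => hI.1 x hxI y hyI hadje
    obtain ⟨hym, hpyI⟩ := key y hyI
    have hyM : s(y, pa y) ∈ M := hmem y hym
    by_cases hxpa : x = pa y
    · rw [show s(y, x) = s(y, pa y) from by rw [hxpa]]
      exact hyM
    · exfalso
      have hpyl : pa y ∈ {v | v ∈ l} := hlset ▸ hpyI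
      obtain ⟨i₀, hi₀⟩ := List.mem_iff_get.mp hpyl
      have hpaym : pa y ∈ matVerts M := ⟨_, hyM, by simp⟩
      have hadj₀ : G.Adj (l.get i₀) y := by
        rw [hi₀]
        exact (G.mem_edgeSet.mp (hMm.1 hyM)).symm
      have hii : i.val < i₀.val := by
        have h1 : ¬(i₀.val < i.val) := fun h => hmin i₀ h hadj₀
        have h3 : i.val ≠ i₀.val := fun h => hxpa (by rw [hxdef, Fin.ext h, hi₀])
        omega
      have hlen : l.length = lC.length + lU.length := by simp [hldef]
      have hi₀C : i₀.val < lC.length := by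
        by_contra h
        push_neg at h
        have hget : l.get i₀ = lU.get ⟨i₀.val - lC.length, by have := i₀.2; omega⟩ :=
          by simp only [List.get_eq_getElem]; exact List.getElem_append_right h
        have : pa y ∈ lU := by
          rw [← hi₀, hget]
          exact lU.get_mem _
        exact ((hlUmem _).mp this).2 hpaym
      have hiC : i.val < lC.length := by omega
      have hgetl : ∀ (m : Fin l.length) (hm : m.val < lC.length),
          l.get m = lC.get ⟨m.val, hm⟩ := fun m hm => by simp only [List.get_eq_getElem]; exact List.getElem_append_left hm
      have hpw := List.pairwise_iff_get.mp hlCpw ⟨i.val, hiC⟩ ⟨i₀.val, hi₀C⟩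
        (by exact hii)
      apply hpw
      have e1 : lC.get ⟨i₀.val, hi₀C⟩ = pa y := by rw [← hgetl i₀ hi₀C, hi₀]
      have e2 : lC.get ⟨i.val, hiC⟩ = x := (hgetl i hiC).symm
      rw [e1, e2]
      have hxm : x ∈ matVerts M := by
        have hxlC : x ∈ lC := by
          rw [← e2]
          exact lC.get_mem _
        exact ((hlCmem' x).mp hxlC).2
      refine ⟨⟨hpyI, hpaym⟩, ⟨hxI, hxm⟩, fun h => hxpa h.symm, ?_⟩
      have hinv2 : pa (pa y) = y := huniq (pa y) y (by rw [Sym2.eq_swap]; exact hyM)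
      rw [hinv2]
      exact hadje.symm
  exact ⟨l, ⟨hlnd, hlset,
    ⟨hsub.trans hMm.1, fun e he f hf => hMm.2 e (hsub he) f (hsub hf)⟩⟩,
    fun e he => hME (hsub he)⟩
end

section
/- Let G be a bipartite graph, E a set of edges of G, and I a maximum independent set of G. If I has an E-good accessibility ordering, then every E-good partial accessibility ordering x'_1,...,x'_{ℓ−1} of a proper subset of I can be extended by one element x'_ℓ ∈ I to an E-good partial accessibility ordering x'_1,...,x'_ℓ. -/
variable {V : Type*}

/-- Characterization of `Msigma` of a list with one element appended. -/
lemma msigma_append_singleton (G : SimpleGraph V) (l' : List V) (x : V) :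
    Msigma G (l' ++ [x]) =
      Msigma G l' ∪ {e | ∃ y, e = s(y, x) ∧ G.Adj x y ∧ ∀ v ∈ l', ¬ G.Adj v y} := by
  ext e
  constructor
  · rintro ⟨i, y, rfl, hadj, hmin⟩
    have hlt : (i : ℕ) < l'.length + 1 := by simpa using i.isLt
    rcases Nat.lt_or_ge (i : ℕ) l'.length with hi | hi
    · left
      have hget : (l' ++ [x]).get i = l'.get ⟨i, hi⟩ := by
        simp only [List.get_eq_getElem]; exact List.getElem_append_left (by omega)
      refine ⟨⟨i, hi⟩, y, by rw [hget], by rw [← hget]; exact hadj, ?_⟩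
      intro j hj
      have hj' : (j : ℕ) < (l' ++ [x]).length := by simp
      have := hmin ⟨j, hj'⟩ hj
      have hgj : (l' ++ [x]).get ⟨j, hj'⟩ = l'.get j := by
        simp only [List.get_eq_getElem]; exact List.getElem_append_left (by omega)
      rwa [hgj] at this
    · have hieq : (i : ℕ) = l'.length := by omega
      right
      have hget : (l' ++ [x]).get i = x := by
        simp only [List.get_eq_getElem, hieq]
        exact List.getElem_concat_length rfl (by simp)
      refine ⟨y, by rw [hget], by rw [← hget]; exact hadj, ?_⟩
      intro v hv
      obtain ⟨j, rfl⟩ := List.mem_iff_get.mp hv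
      have hj' : (j : ℕ) < (l' ++ [x]).length := by simp
      have := hmin ⟨j, hj'⟩ (by rw [hieq]; exact j.isLt)
      have hgj : (l' ++ [x]).get ⟨j, hj'⟩ = l'.get j := by
        simp only [List.get_eq_getElem]; exact List.getElem_append_left (by omega)
      rwa [hgj] at this
  · rintro (⟨i, y, rfl, hadj, hmin⟩ | ⟨y, rfl, hadj, hmin⟩)
    · have hi' : (i : ℕ) < (l' ++ [x]).length := by simp
      have hget : (l' ++ [x]).get ⟨i, hi'⟩ = l'.get i := by
        simp only [List.get_eq_getElem]; exact List.getElem_append_left (by omega)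
      refine ⟨⟨i, hi'⟩, y, by rw [hget], by rw [hget]; exact hadj, ?_⟩
      intro j hj
      have hjlt : (j : ℕ) < l'.length := lt_trans hj i.isLt
      have hgj : (l' ++ [x]).get j = l'.get ⟨j, hjlt⟩ := by
        simp only [List.get_eq_getElem]; exact List.getElem_append_left (by omega)
      rw [hgj]; exact hmin ⟨j, hjlt⟩ hj
    · have hi' : l'.length < (l' ++ [x]).length := by simp
      have hget : (l' ++ [x]).get ⟨l'.length, hi'⟩ = x := by
        simp only [List.get_eq_getElem]
        exact List.getElem_concat_length rfl (by simp)
      refine ⟨⟨l'.length, hi'⟩, y, by rw [hget], by rw [hget]; exact hadj, ?_⟩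
      intro j hj
      have hjlt : (j : ℕ) < l'.length := hj
      have hgj : (l' ++ [x]).get j = l'.get ⟨j, hjlt⟩ := by
        simp only [List.get_eq_getElem]; exact List.getElem_append_left (by omega)
      rw [hgj]
      exact hmin _ (List.get_mem l' ⟨j.1, hjlt⟩)

/-- If `I` has an `E`-good accessibility ordering, then every `E`-good partial
accessibility ordering of a proper subset of `I` can be extended by one element. -/
theorem stmt6 [Fintype V] (G : SimpleGraph V) (A B : Set V) (hbip : IsBipartition G A B)
    (E : Set (Sym2 V)) (I : Set V) (hI : IsMaximumIndepSet G I)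
    (hex : ∃ l, IsAccessibilityOrdering G I l ∧ Msigma G l ⊆ E)
    (l' : List V) (hl' : IsPartialAccessibilityOrdering G I l')
    (hgood : Msigma G l' ⊆ E) (hproper : {v | v ∈ l'} ≠ I) :
    ∃ x ∈ I, x ∉ l' ∧ IsPartialAccessibilityOrdering G I (l' ++ [x]) ∧
      Msigma G (l' ++ [x]) ⊆ E := by
  classical
  obtain ⟨l, ⟨hnodup, hset, hmatch⟩, hE⟩ := hex
  have hIsub : {v | v ∈ l'} ⊆ I := hl'.2.1
  -- there is an element of `l` not in `l'`
  have hPex : ∃ n, ∃ h : n < l.length, l.get ⟨n, h⟩ ∉ l' := by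
    by_contra h
    push_neg at h
    apply hproper
    refine Set.Subset.antisymm hIsub ?_
    intro v hv
    have hvl : v ∈ l := by rw [← hset] at hv; exact hv
    obtain ⟨i, rfl⟩ := List.mem_iff_get.mp hvl
    exact h i i.isLt
  set n := Nat.find hPex with hn_def
  obtain ⟨hn, hxnot⟩ := Nat.find_spec hPex
  set x := l.get ⟨n, hn⟩ with hx_def
  have hxI : x ∈ I := by rw [← hset]; exact List.get_mem l ⟨n, hn⟩
  have hminI : ∀ m (h : m < l.length), m < n → l.get ⟨m, h⟩ ∈ l' := by
    intro m h hm
    have := Nat.find_min hPex hm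
    push_neg at this
    exact this h
  -- every "new" edge is in `Msigma G l`
  have hnew : ∀ y : V, G.Adj x y → (∀ v ∈ l', ¬ G.Adj v y) → s(y, x) ∈ Msigma G l := by
    intro y hadj hno
    refine ⟨⟨n, hn⟩, y, rfl, hadj, ?_⟩
    intro j hj
    exact hno _ (hminI j j.isLt hj)
  have hMs := msigma_append_singleton G l' x
  -- basic facts
  have hindep := hI.1
  have hxnl' : x ∉ l' := hxnot
  -- the new list is a partial accessibility ordering
  refine ⟨x, hxI, hxnl', ⟨?_, ?_, ?_, ?_⟩, ?_⟩
  · -- Nodup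
    simp [List.nodup_append, hl'.1, hxnl']
    rintro a ha rfl; exact hxnl' ha
  · -- subset of I
    intro v hv
    simp only [Set.mem_setOf_eq, List.mem_append, List.mem_singleton] at hv
    rcases hv with hv | rfl
    · exact hIsub hv
    · exact hxI
  · -- edges are in G
    rw [hMs]
    rintro e (he | ⟨y, rfl, hadj, -⟩)
    · exact hl'.2.2.1 he
    · exact G.mem_edgeSet.mpr hadj.symm
  · -- pairwise disjoint
    rw [hMs]
    -- first: a new edge is vertex-disjoint from any old edge
    have key : ∀ e ∈ Msigma G l', ∀ y : V, G.Adj x y → (∀ v ∈ l', ¬ G.Adj v y) →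
        ∀ v : V, v ∈ e → v ∉ s(y, x) := by
      rintro e ⟨i, y', rfl, hadj', hmin'⟩ y hadj hno v hve hvf
      have hli : l'.get i ∈ l' := List.get_mem l' ⟨i.1, i.2⟩
      have hliI : l'.get i ∈ I := hIsub hli
      rw [Sym2.mem_iff] at hve hvf
      rcases hve with rfl | rfl
      · -- v = y'
        rcases hvf with h | h
        · exact hno _ hli (h ▸ hadj')
        · exact hindep _ hliI _ hxI (h ▸ hadj')
      · -- v = l'.get i
        rcases hvf with h | h
        · have hyI : y ∈ I := h ▸ hIsub hli
          exact hindep _ hxI _ hyI hadj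
        · exact hxnl' (h ▸ hli)
    rintro e (he | ⟨y1, rfl, hadj1, hno1⟩) f (hf | ⟨y2, rfl, hadj2, hno2⟩) hne v hve
    · exact hl'.2.2.2 e he f hf hne v hve
    · exact key e he y2 hadj2 hno2 v hve
    · intro hvf
      exact key f hf y1 hadj1 hno1 v hvf hve
    · -- two new edges: both lie in Msigma G l, share x, contradiction
      have h1 := hnew y1 hadj1 hno1
      have h2 := hnew y2 hadj2 hno2
      intro hvf
      exact hmatch.2 _ h1 _ h2 hne v hve hvf
  · -- E-good
    rw [hMs]
    rintro e (he | ⟨y, rfl, hadj, hno⟩)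
    · exact hgood he
    · exact hE (hnew y hadj hno)
end

section
/- Let M be a matching in a bipartite graph G with partite sets A and B, and let D(M) be the digraph on V(G) obtained by orienting each edge of G not in M from A to B, and each edge of M from B to A. Then M is a maximum matching if and only if D(M) contains no directed path from a vertex of A not covered by M to a vertex of B not covered by M. -/
variable {V : Type*}

-- matching uniqueness
lemma matching_unique {G : SimpleGraph V} {M : Set (Sym2 V)} (hM : IsMatchingSet G M)
    {e f : Sym2 V} (he : e ∈ M) (hf : f ∈ M) {v : V} (hv : v ∈ e) (hv' : v ∈ f) : e = f := by
  by_contra h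
  exact hM.2 e he f hf h v hv hv'

lemma mem_matVerts {M : Set (Sym2 V)} {e : Sym2 V} {v : V} (he : e ∈ M) (hv : v ∈ e) :
    v ∈ matVerts M := ⟨e, he, hv⟩

-- chain from RTG
set_option linter.deprecated false in
lemma lchain_cons {r : V → V → Prop} {a b : V} {l : List V} :
    List.Chain r a (b :: l) ↔ r a b ∧ List.Chain r b l := by
  unfold List.Chain
  exact List.isChain_cons_cons

lemma chain_snoc {r : V → V → Prop} :
    ∀ (l : List V) (a b d : V), List.Chain r a (l ++ [b]) → r b d →
      List.Chain r a ((l ++ [b]) ++ [d]) := by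
  intro l
  induction l with
  | nil =>
    intro a b d h hbd
    simp only [List.nil_append] at h
    rw [lchain_cons] at h
    show List.Chain r a (b :: [d])
    exact lchain_cons.mpr ⟨h.1, lchain_cons.mpr ⟨hbd, List.Chain.nil⟩⟩
  | cons x t ih =>
    intro a b d h hbd
    rw [List.cons_append, lchain_cons] at h
    rw [List.cons_append, List.cons_append, lchain_cons]
    exact ⟨h.1, ih x b d h.2 hbd⟩

lemma rtg_chain {r : V → V → Prop} {a b : V} (h : Relation.ReflTransGen r a b) (hne : a ≠ b) :
    ∃ l, List.Chain r a (l ++ [b]) := by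
  have key : ∀ c, Relation.ReflTransGen r a c → a = c ∨ ∃ l, List.Chain r a (l ++ [c]) := by
    intro c hc
    induction hc with
    | refl => exact Or.inl rfl
    | @tail u v h1 h2 ih =>
      right
      rcases ih with rfl | ⟨l, hl⟩
      · exact ⟨[], by simp [lchain_cons, h2, List.Chain.nil]⟩
      · exact ⟨l ++ [u], chain_snoc l a u v hl h2⟩
  rcases key b h with rfl | hl
  · exact absurd rfl hne
  · exact hl

lemma chain_suffix {r : V → V → Prop} :
    ∀ (s : List V) (a c : V) (t : List V), List.Chain r a (s ++ c :: t) → List.Chain r c t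
  | [], a, c, t, h => (lchain_cons.mp h).2
  | x :: s', a, c, t, h => chain_suffix s' x c t (lchain_cons.mp h).2

lemma chain_target {r : V → V → Prop} :
    ∀ (l : List V) (a : V), List.Chain r a l → ∀ x ∈ l, ∃ y, r y x := by
  intro l
  induction l with
  | nil => intro a _ x hx; simp at hx
  | cons h t ih =>
    intro a hc x hx
    rw [lchain_cons] at hc
    rcases List.mem_cons.mp hx with rfl | hx
    · exact ⟨a, hc.1⟩
    · exact ih h hc.2 x hx

lemma chain_imp {r r' : V → V → Prop} :
    ∀ (l : List V) (a b : V), List.Chain r a (l ++ [b]) →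
      (∀ x ∈ a :: l, ∀ y, r x y → r' x y) → List.Chain r' a (l ++ [b]) := by
  intro l
  induction l with
  | nil =>
    intro a b h hcond
    simp only [List.nil_append, lchain_cons, List.Chain.nil, and_true] at h ⊢
    exact hcond a (by simp) b h
  | cons x t ih =>
    intro a b h hcond
    rw [List.cons_append, lchain_cons] at h ⊢
    exact ⟨hcond a (by simp) x h.1, ih x b h.2 fun z hz => hcond z (by simp [hz])⟩

lemma avoid {r : V → V → Prop} {a1 b1 b : V} (hout : ∀ d, r b1 d → d = a1)
    (hne1 : a1 ≠ b1) (hne2 : b ≠ a1) :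
    ∀ (n : ℕ) (l : List V), l.length ≤ n → List.Chain r a1 (l ++ [b]) →
      ∃ l₂, List.Chain r a1 (l₂ ++ [b]) ∧ l₂.length ≤ l.length ∧ b1 ∉ a1 :: l₂ := by
  intro n
  induction n with
  | zero =>
    intro l hl hc
    rw [Nat.le_zero, List.length_eq_zero_iff] at hl
    subst hl
    exact ⟨[], hc, le_refl _, by simp [Ne.symm hne1]⟩
  | succ n ih =>
    intro l hl hc
    by_cases hmem : b1 ∈ a1 :: l
    · have hb1l : b1 ∈ l := by
        rcases List.mem_cons.mp hmem with h | h
        · exact absurd h.symm hne1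
        · exact h
      obtain ⟨s, t, rfl⟩ := List.append_of_mem hb1l
      have hsuf : List.Chain r b1 (t ++ [b]) := by
        have := hc
        rw [show (s ++ b1 :: t) ++ [b] = s ++ b1 :: (t ++ [b]) by simp] at this
        exact chain_suffix s a1 b1 (t ++ [b]) this
      rcases t with _ | ⟨c, t'⟩
      · -- arc b1 → b, so b = a1, contradiction
        simp only [List.nil_append, lchain_cons] at hsuf
        exact absurd (hout b hsuf.1) hne2
      · rw [List.cons_append, lchain_cons] at hsuf
        have hca1 : c = a1 := hout c hsuf.1
        subst hca1
        have hlen : t'.length ≤ n := by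
          have := hl
          simp only [List.length_append, List.length_cons] at this
          omega
        obtain ⟨l₂, h1, h2, h3⟩ := ih t' hlen hsuf.2
        refine ⟨l₂, h1, ?_, h3⟩
        simp only [List.length_append, List.length_cons]
        omega
    · exact ⟨l, hc, le_refl _, hmem⟩

lemma augment_uncovered [Finite V] {G : SimpleGraph V} {M : Set (Sym2 V)}
    (hM : IsMatchingSet G M) {a b : V} (hab : G.Adj a b)
    (ha : a ∉ matVerts M) (hb : b ∉ matVerts M) :
    ∃ N, IsMatchingSet G N ∧ N.ncard = M.ncard + 1 := by
  refine ⟨insert s(a, b) M, ⟨?_, ?_⟩, ?_⟩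
  · intro e he
    rcases he with rfl | he
    · exact hab
    · exact hM.1 he
  · intro e he f hf hef v hve hvf
    rcases he with rfl | he <;> rcases hf with rfl | hf
    · exact hef rfl
    · rcases Sym2.mem_iff.mp hve with rfl | rfl
      · exact ha (mem_matVerts hf hvf)
      · exact hb (mem_matVerts hf hvf)
    · rcases Sym2.mem_iff.mp hvf with rfl | rfl
      · exact ha (mem_matVerts he hve)
      · exact hb (mem_matVerts he hve)
    · exact hM.2 e he f hf hef v hve hvf
  · have hnm : s(a, b) ∉ M := fun h => ha (mem_matVerts h (by simp))
    exact Set.ncard_insert_of_notMem hnm (Set.toFinite M)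

/-- the exchanged matching M₂ -/
lemma exchange_matching [Finite V] {G : SimpleGraph V} {A B : Set V} {M : Set (Sym2 V)}
    (hM : IsMatchingSet G M) {a b1 a1 : V}
    (hadj : G.Adj a b1) (ha : a ∉ matVerts M) (he1 : s(b1, a1) ∈ M)
    (hab1 : a ≠ b1) (ha1a : a1 ≠ a) (ha1b1 : a1 ≠ b1) :
    IsMatchingSet G (insert s(a, b1) (M \ {s(b1, a1)})) ∧
    (insert s(a, b1) (M \ {s(b1, a1)})).ncard = M.ncard ∧
    a1 ∉ matVerts (insert s(a, b1) (M \ {s(b1, a1)})) := by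
  have hnm : s(a, b1) ∉ M := fun h => ha (mem_matVerts h (by simp))
  refine ⟨⟨?_, ?_⟩, ?_, ?_⟩
  · intro e he
    rcases he with rfl | he
    · exact hadj
    · exact hM.1 he.1
  · intro e he f hf hef v hve hvf
    rcases he with rfl | he <;> rcases hf with rfl | hf
    · exact hef rfl
    · rcases Sym2.mem_iff.mp hve with rfl | rfl
      · exact ha (mem_matVerts hf.1 hvf)
      · exact hf.2 (matching_unique hM hf.1 he1 hvf (by simp))
    · rcases Sym2.mem_iff.mp hvf with rfl | rfl
      · exact ha (mem_matVerts he.1 hve)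
      · exact he.2 (matching_unique hM he.1 he1 hve (by simp))
    · exact hM.2 e he.1 f hf.1 hef v hve hvf
  · have hnm2 : s(a, b1) ∉ M \ {s(b1, a1)} := fun h => hnm h.1
    rw [Set.ncard_insert_of_notMem hnm2 (Set.toFinite _),
      Set.ncard_diff_singleton_add_one he1 (Set.toFinite M)]
  · rintro ⟨e, he, hve⟩
    rcases he with rfl | he
    · rcases Sym2.mem_iff.mp hve with rfl | rfl
      · exact ha1a rfl
      · exact ha1b1 rfl
    · exact he.2 (matching_unique hM he.1 he1 hve (by simp))

lemma aug [Finite V] {G : SimpleGraph V} {A B : Set V} (hdisj : Disjoint A B) :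
    ∀ (n : ℕ) (M : Set (Sym2 V)), IsMatchingSet G M → ∀ (a b : V) (l : List V),
      l.length ≤ n → a ∈ A → a ∉ matVerts M → b ∈ B → b ∉ matVerts M →
      List.Chain (DMarc G A B M) a (l ++ [b]) →
      ∃ N, IsMatchingSet G N ∧ N.ncard = M.ncard + 1 := by
  have hAB : ∀ v : V, v ∈ A → v ∈ B → False := fun v hA hB =>
    Set.disjoint_left.mp hdisj hA hB
  intro n
  induction n with
  | zero =>
    intro M hM a b l hl hA ha hB hb hc
    rw [Nat.le_zero, List.length_eq_zero_iff] at hl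
    subst hl
    simp only [List.nil_append, lchain_cons] at hc
    obtain ⟨⟨hadj, harc⟩, -⟩ := hc
    rcases harc with ⟨-, -, -⟩ | ⟨haB, -, -⟩
    · exact augment_uncovered hM hadj ha hb
    · exact absurd haB (fun h => hAB a hA h)
  | succ n ih =>
    intro M hM a b l hl hA ha hB hb hc
    cases l with
    | nil =>
      simp only [List.nil_append, lchain_cons] at hc
      obtain ⟨⟨hadj, harc⟩, -⟩ := hc
      rcases harc with ⟨-, -, -⟩ | ⟨haB, -, -⟩
      · exact augment_uncovered hM hadj ha hb
      · exact absurd haB (fun h => hAB a hA h)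
    | cons b1 t =>
      rw [List.cons_append, lchain_cons] at hc
      obtain ⟨⟨hadj1, harc1⟩, hc⟩ := hc
      rcases harc1 with ⟨-, hb1B, hsab1⟩ | ⟨haB, -, -⟩
      swap
      · exact absurd haB (fun h => hAB a hA h)
      by_cases hb1cov : b1 ∈ matVerts M
      swap
      · exact augment_uncovered hM hadj1 ha hb1cov
      cases t with
      | nil =>
        simp only [List.nil_append, lchain_cons] at hc
        obtain ⟨⟨-, harc2⟩, -⟩ := hc
        rcases harc2 with ⟨hb1A, -, -⟩ | ⟨-, -, hs⟩
        · exact absurd hb1A (fun h => hAB b1 h hb1B)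
        · exact absurd (mem_matVerts hs (by simp)) hb
      | cons a1 t2 =>
        rw [List.cons_append, lchain_cons] at hc
        obtain ⟨⟨hadj2, harc2⟩, hc⟩ := hc
        rcases harc2 with ⟨hb1A, -, -⟩ | ⟨-, ha1A, he1⟩
        · exact absurd hb1A (fun h => hAB b1 h hb1B)
        -- basic inequalities
        have hab1 : a ≠ b1 := fun h => hAB a hA (h ▸ hb1B)
        have ha1a : a1 ≠ a := fun h => ha (h ▸ mem_matVerts he1 (by simp))
        have ha1b1 : a1 ≠ b1 := fun h => hAB a1 ha1A (h ▸ hb1B)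
        have hba1 : b ≠ a1 := fun h => hAB b (h ▸ ha1A) hB
        obtain ⟨hM₂, hcard₂, ha1M₂⟩ :=
          exchange_matching (G := G) (A := A) (B := B) hM hadj1 ha he1 hab1 ha1a ha1b1
        set M₂ := insert s(a, b1) (M \ {s(b1, a1)}) with hM₂def
        have hbM₂ : b ∉ matVerts M₂ := by
          rintro ⟨e, he, hbe⟩
          rcases he with rfl | he
          · rcases Sym2.mem_iff.mp hbe with rfl | rfl
            · exact hAB _ hA hB
            · exact hb hb1cov
          · exact hb (mem_matVerts he.1 hbe)
        -- unique out-arc from b1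
        have hout : ∀ d, DMarc G A B M b1 d → d = a1 := by
          intro d ⟨hadj', harc'⟩
          rcases harc' with ⟨hb1A, -, -⟩ | ⟨-, -, hs⟩
          · exact absurd hb1A (fun h => hAB b1 h hb1B)
          · have := matching_unique hM hs he1 (Sym2.mem_mk_left _ _) (Sym2.mem_mk_left _ _)
            rcases Sym2.eq_iff.mp this with ⟨-, h2⟩ | ⟨h1, -⟩
            · exact h2
            · exact absurd h1.symm ha1b1
        obtain ⟨l₂, hc₂, hlen₂, hb1not⟩ :=
          avoid hout ha1b1 hba1 t2.length t2 le_rfl hc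
        have hsrcA : ∀ x ∈ a1 :: l₂, x ∈ A → x ∈ matVerts M := by
          intro x hx hxA
          rcases List.mem_cons.mp hx with rfl | hx
          · exact mem_matVerts he1 (Sym2.mem_mk_right _ _)
          · obtain ⟨y, hy⟩ := chain_target (l₂ ++ [b]) a1 hc₂ x
              (List.mem_append.mpr (Or.inl hx))
            obtain ⟨-, harc'⟩ := hy
            rcases harc' with ⟨-, hxB, -⟩ | ⟨-, -, hs⟩
            · exact absurd hxB (fun h => hAB x hxA h)
            · exact mem_matVerts hs (Sym2.mem_mk_right _ _)
        have hconv : ∀ x ∈ a1 :: l₂, ∀ y, DMarc G A B M x y → DMarc G A B M₂ x y := by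
          intro x hx y ⟨hadj', harc'⟩
          refine ⟨hadj', ?_⟩
          rcases harc' with ⟨hxA, hyB, hs⟩ | ⟨hxB, hyA, hs⟩
          · refine Or.inl ⟨hxA, hyB, ?_⟩
            rintro (heq | hmem)
            · rcases Sym2.eq_iff.mp heq with ⟨h1, -⟩ | ⟨h1, -⟩
              · exact ha (h1 ▸ hsrcA x hx hxA)
              · exact hAB x hxA (h1 ▸ hb1B)
            · exact hs hmem.1
          · refine Or.inr ⟨hxB, hyA, Or.inr ⟨hs, ?_⟩⟩
            intro heq
            rcases Sym2.eq_iff.mp heq with ⟨h1, -⟩ | ⟨h1, -⟩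
            · exact hb1not (h1 ▸ hx)
            · exact hAB x (h1 ▸ ha1A) hxB
        have hc₂' := chain_imp l₂ a1 b hc₂ hconv
        have hlen' : l₂.length ≤ n := by
          simp only [List.length_cons] at hl
          omega
        obtain ⟨N, hN, hcard⟩ := ih M₂ hM₂ a1 b l₂ hlen' ha1A ha1M₂ hB hbM₂ hc₂'
        exact ⟨N, hN, by rw [hcard, hcard₂]⟩

lemma sym2_cases (e : Sym2 V) : ∃ x y, e = s(x, y) := by
  induction e using Sym2.ind with
  | _ x y => exact ⟨x, y, rfl⟩

lemma koenig_max [Finite V] {G : SimpleGraph V} {A B : Set V} (hbip : IsBipartition G A B)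
    {M : Set (Sym2 V)} (hM : IsMatchingSet G M)
    (hno : ¬ ∃ a ∈ A, a ∉ matVerts M ∧ ∃ b ∈ B, b ∉ matVerts M ∧
        Relation.ReflTransGen (DMarc G A B M) a b) :
    ∀ M', IsMatchingSet G M' → M'.ncard ≤ M.ncard := by
  classical
  intro M' hM'
  rcases isEmpty_or_nonempty V with hV | hV
  · have hempty : M' = ∅ := by
      ext e
      simp only [Set.mem_empty_iff_false, iff_false]
      intro h
      obtain ⟨x, y, rfl⟩ := sym2_cases e
      exact (hV.false x).elim
    simp [hempty]
  obtain ⟨hdisj, huniv, hor⟩ := hbip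
  have hAB : ∀ v : V, v ∈ A → v ∈ B → False := fun v h h' =>
    Set.disjoint_left.mp hdisj h h'
  set R : Set V :=
    {v | ∃ a ∈ A, a ∉ matVerts M ∧ Relation.ReflTransGen (DMarc G A B M) a v} with hRdef
  set C : Set V := (A \ R) ∪ (B ∩ R) with hCdef
  have hstep : ∀ v ∈ R, ∀ w, DMarc G A B M v w → w ∈ R := by
    rintro v ⟨a0, hA0, hcov0, hrtg⟩ w harc
    exact ⟨a0, hA0, hcov0, hrtg.tail harc⟩
  have hCcov : ∀ c ∈ C, c ∈ matVerts M := by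
    rintro c (⟨hcA, hcR⟩ | ⟨hcB, hcR⟩)
    · by_contra hcov
      exact hcR ⟨c, hcA, hcov, Relation.ReflTransGen.refl⟩
    · by_contra hcov
      obtain ⟨a0, hA0, hcov0, hrtg⟩ := hcR
      exact hno ⟨a0, hA0, hcov0, c, hcB, hcov, hrtg⟩
  have hkey : ∀ p q : V, p ∈ A → p ∉ R → q ∈ B → q ∈ R → s(p, q) ∈ M → False := by
    intro p q hpA hpR hqB hqR hpq
    have hadj : G.Adj p q := hM.1 hpq
    have harc : DMarc G A B M q p :=
      ⟨hadj.symm, Or.inr ⟨hqB, hpA, by rwa [Sym2.eq_swap]⟩⟩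
    exact hpR (hstep q hqR p harc)
  have hhelp : ∀ u v : V, G.Adj u v → u ∈ A → v ∈ B → u ∈ C ∨ v ∈ C := by
    intro u v hadj huA hvB
    by_cases huR : u ∈ R
    · refine Or.inr (Or.inr ⟨hvB, ?_⟩)
      by_cases hme : s(u, v) ∈ M
      · obtain ⟨a0, hA0, hcov0, hrtg⟩ := huR
        rcases hrtg.cases_tail with heq | ⟨w, hrtgw, harc⟩
        · exact absurd (heq ▸ mem_matVerts hme (Sym2.mem_mk_left _ _)) hcov0
        · rcases harc.2 with ⟨-, huB, -⟩ | ⟨hwB, -, hs⟩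
          · exact absurd huB (fun h => hAB u huA h)
          · have := matching_unique hM hs hme (Sym2.mem_mk_right _ _) (Sym2.mem_mk_left _ _)
            rcases Sym2.eq_iff.mp this with ⟨h1, -⟩ | ⟨h1, -⟩
            · exact absurd (h1 ▸ hwB) (fun h => hAB u huA h)
            · exact h1 ▸ ⟨a0, hA0, hcov0, hrtgw⟩
      · exact hstep u huR v ⟨hadj, Or.inl ⟨huA, hvB, hme⟩⟩
    · exact Or.inl (Or.inl ⟨huA, huR⟩)
  have hcover : ∀ u v : V, G.Adj u v → u ∈ C ∨ v ∈ C := by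
    intro u v hadj
    rcases hor hadj with ⟨huA, hvB⟩ | ⟨huB, hvA⟩
    · exact hhelp u v hadj huA hvB
    · exact (hhelp v u hadj.symm hvA huB).symm
  -- |C| ≤ |M|
  have hCM : C.ncard ≤ M.ncard := by
    have hex : ∀ c ∈ C, ∃ e, e ∈ M ∧ c ∈ e := fun c hc => hCcov c hc
    haveI : Nonempty (Sym2 V) := ⟨s(hV.some, hV.some)⟩
    choose! f hf1 hf2 using hex
    refine Set.ncard_le_ncard_of_injOn f (fun c hc => hf1 c hc) ?_ (Set.toFinite M)
    intro c hc c' hc' heq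
    by_contra hne
    obtain ⟨x, y, hxy⟩ := sym2_cases (f c)
    have hadjxy : G.Adj x y := by
      have := hM.1 (hf1 c hc)
      rwa [hxy, SimpleGraph.mem_edgeSet] at this
    have hce : c ∈ s(x, y) := hxy ▸ hf2 c hc
    have hc'e : c' ∈ s(x, y) := hxy ▸ (heq ▸ hf2 c' hc')
    have hedge : s(c, c') = f c ∧ G.Adj c c' := by
      rcases Sym2.mem_iff.mp hce with rfl | rfl <;>
        rcases Sym2.mem_iff.mp hc'e with rfl | rfl
      · exact absurd rfl hne
      · exact ⟨hxy.symm, hadjxy⟩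
      · exact ⟨by rw [hxy, Sym2.eq_swap], hadjxy.symm⟩
      · exact absurd rfl hne
    have hccM : s(c, c') ∈ M := hedge.1 ▸ hf1 c hc
    rcases hc with ⟨hcA, hcR⟩ | ⟨hcB, hcR⟩ <;> rcases hc' with ⟨hc'A, hc'R⟩ | ⟨hc'B, hc'R⟩
    · rcases hor hedge.2 with ⟨-, h2⟩ | ⟨h2, -⟩
      · exact hAB c' hc'A h2
      · exact hAB c hcA h2
    · exact hkey c c' hcA hcR hc'B hc'R hccM
    · exact hkey c' c hc'A hc'R hcB hcR (by rwa [Sym2.eq_swap])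
    · rcases hor hedge.2 with ⟨h2, -⟩ | ⟨-, h2⟩
      · exact hAB c h2 hcB
      · exact hAB c' h2 hc'B
  -- |M'| ≤ |C|
  have hM'C : M'.ncard ≤ C.ncard := by
    have hex : ∀ e ∈ M', ∃ v, v ∈ C ∧ v ∈ e := by
      intro e he
      obtain ⟨x, y, rfl⟩ := sym2_cases e
      have hadj : G.Adj x y := hM'.1 he
      rcases hcover x y hadj with h | h
      · exact ⟨x, h, Sym2.mem_mk_left _ _⟩
      · exact ⟨y, h, Sym2.mem_mk_right _ _⟩
    choose! g hg1 hg2 using hex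
    refine Set.ncard_le_ncard_of_injOn g (fun e he => hg1 e he) ?_ (Set.toFinite C)
    intro e he f hf heq
    exact matching_unique hM' he hf (hg2 e he) (heq ▸ hg2 f hf)
  exact le_trans hM'C hCM

/-- Kőnig: `M` is maximum iff `D(M)` has no directed path from an uncovered
`A`-vertex to an uncovered `B`-vertex. -/
theorem stmt7 [Fintype V] (G : SimpleGraph V) (A B : Set V) (hbip : IsBipartition G A B)
    (M : Set (Sym2 V)) (hM : IsMatchingSet G M) :
    IsMaximumMatching G M ↔
      ¬ ∃ a ∈ A, a ∉ matVerts M ∧ ∃ b ∈ B, b ∉ matVerts M ∧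
        Relation.ReflTransGen (DMarc G A B M) a b := by
  constructor
  · rintro ⟨-, hmax⟩ ⟨a, haA, hacov, b, hbB, hbcov, hrtg⟩
    have hne : a ≠ b := fun h => Set.disjoint_left.mp hbip.1 haA (h ▸ hbB)
    obtain ⟨l, hc⟩ := rtg_chain hrtg hne
    obtain ⟨N, hN, hcard⟩ := aug hbip.1 l.length M hM a b l le_rfl haA hacov hbB hbcov hc
    have := hmax N hN
    omega
  · intro hno
    exact ⟨hM, koenig_max hbip hM hno⟩
end

section
/- Let M be a maximum matching in a bipartite graph G such that the digraph D(M) is acyclic. Then every maximum matching in G arises from M by a finite sequence of edge exchanges. -/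
variable {V : Type*}

lemma matchingSubset {G : SimpleGraph V} {N N' : Set (Sym2 V)}
    (h : IsMatchingSet G N) (hs : N' ⊆ N) : IsMatchingSet G N' :=
  ⟨hs.trans h.1, fun e he f hf => h.2 e (hs he) f (hs hf)⟩

lemma matVerts_ncard [Fintype V] {G : SimpleGraph V} :
    ∀ (n : ℕ) (N : Set (Sym2 V)), IsMatchingSet G N → N.ncard = n →
      (matVerts N).ncard = 2 * n := by
  intro n
  induction n with
  | zero =>
    intro N hN h0
    have hNe : N = ∅ := (Set.ncard_eq_zero (Set.toFinite N)).mp h0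
    subst hNe
    simp [matVerts]
  | succ n ih =>
    intro N hN h0
    have hne : N.Nonempty := Set.nonempty_of_ncard_ne_zero (by omega)
    obtain ⟨x, y, he⟩ : ∃ x y, s(x, y) ∈ N := by
      obtain ⟨e, he⟩ := hne
      induction e using Sym2.ind with
      | _ x y => exact ⟨x, y, he⟩
    have hxy : x ≠ y := (G.ne_of_adj ((SimpleGraph.mem_edgeSet G).mp (hN.1 he)))
    have hsplit : matVerts N = {x, y} ∪ matVerts (N \ {s(x, y)}) := by
      ext v
      constructor
      · rintro ⟨f, hf, hvf⟩
        by_cases hfe : f = s(x, y)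
        · subst hfe
          exact Or.inl (Sym2.mem_iff.mp hvf)
        · exact Or.inr ⟨f, ⟨hf, hfe⟩, hvf⟩
      · rintro (hv | ⟨f, ⟨hf, _⟩, hvf⟩)
        · exact ⟨s(x, y), he, Sym2.mem_iff.mpr (by simpa using hv)⟩
        · exact ⟨f, hf, hvf⟩
    have hdisj : Disjoint ({x, y} : Set V) (matVerts (N \ {s(x, y)})) := by
      rw [Set.disjoint_left]
      rintro v hv ⟨f, ⟨hf, hfne⟩, hvf⟩
      have hne2 : s(x, y) ≠ f := fun h => hfne (by simp [← h])
      have hvxy : v ∈ s(x, y) := Sym2.mem_iff.mpr hv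
      exact hN.2 _ he f hf hne2 v hvxy hvf
    have hsub : IsMatchingSet G (N \ {s(x, y)}) := matchingSubset hN Set.diff_subset
    have hcard' : (N \ {s(x, y)}).ncard = n := by
      have := Set.ncard_diff_singleton_add_one he (Set.toFinite N)
      omega
    rw [hsplit, Set.ncard_union_eq hdisj (Set.toFinite _) (Set.toFinite _),
      Set.ncard_pair hxy, ih _ hsub hcard']
    ring


/-- If `D(M)` is acyclic, then every maximum matching arises from `M` by a finite
sequence of edge exchanges. -/
theorem stmt11 [Fintype V] (G : SimpleGraph V) (A B : Set V) (hbip : IsBipartition G A B)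
    (M : Set (Sym2 V)) (hM : IsMaximumMatching G M) (hacyc : DMAcyclic G A B M) :
    ∀ M', IsMaximumMatching G M' → Relation.ReflTransGen (EdgeExchange G A B) M M' := by
  obtain ⟨hdisjAB, huniv, hadjAB⟩ := hbip
  intro M' hM'
  have hMM' : M'.ncard = M.ncard := le_antisymm (hM.2 M' hM'.1) (hM'.2 M hM.1)
  suffices h : ∀ (n : ℕ) (Mc : Set (Sym2 V)), (Mc \ M').ncard = n →
      IsMatchingSet G Mc → Mc.ncard = M.ncard → Mc \ M' ⊆ M → M ∩ M' ⊆ Mc →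
      Relation.ReflTransGen (EdgeExchange G A B) Mc M' by
    exact h _ M rfl hM.1 rfl Set.diff_subset Set.inter_subset_left
  intro n
  induction n using Nat.strong_induction_on with
  | _ n ih =>
  intro Mc hn hMc hcard hInv1 hInv2
  by_cases heqc : Mc = M'
  · exact heqc ▸ Relation.ReflTransGen.refl
  have hMcM' : Mc.ncard = M'.ncard := by rw [hcard, hMM']
  -- Step A: there is a vertex covered by M' but not by Mc
  have hx : ∃ x, x ∈ matVerts M' ∧ x ∉ matVerts Mc := by
    by_contra hcon
    push_neg at hcon
    have hVeq : matVerts M' = matVerts Mc :=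
      Set.eq_of_subset_of_ncard_le hcon
        (by rw [matVerts_ncard Mc.ncard Mc hMc rfl,
            matVerts_ncard M'.ncard M' hM'.1 rfl, hMcM']) (Set.toFinite _)
    have hne : (M' \ Mc).Nonempty := by
      rcases Set.eq_empty_or_nonempty (M' \ Mc) with h | h
      · exact absurd (Set.eq_of_subset_of_ncard_le (Set.diff_eq_empty.mp h)
          hMcM'.le (Set.toFinite _)).symm heqc
      · exact h
    set W : Set V := {v | ∃ e ∈ M' \ Mc, v ∈ e} with hW
    have fStep : ∀ x ∈ W, ∃ z, s(x, z) ∈ Mc ∧ s(x, z) ∉ M' ∧ z ∈ W := by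
      rintro x ⟨e, ⟨heM', heMc⟩, hxe⟩
      have hxMc : x ∈ matVerts Mc := by rw [← hVeq]; exact ⟨e, heM', hxe⟩
      obtain ⟨f, hfMc, hxf⟩ := hxMc
      obtain ⟨z, rfl⟩ := Sym2.mem_iff_exists.mp hxf
      have hfe : s(x, z) ≠ e := fun h => heMc (h ▸ hfMc)
      have hfM' : s(x, z) ∉ M' := fun h =>
        hM'.1.2 _ h e heM' hfe x (Sym2.mem_mk_left x z) hxe
      have hzM' : z ∈ matVerts M' := by
        rw [hVeq]; exact ⟨s(x, z), hfMc, Sym2.mem_mk_right x z⟩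
      obtain ⟨e', he'M', hze'⟩ := hzM'
      have he'Mc : e' ∉ Mc := by
        intro h
        by_cases hee : e' = s(x, z)
        · exact hfM' (hee ▸ he'M')
        · exact hMc.2 e' h _ hfMc hee z hze' (Sym2.mem_mk_right x z)
      exact ⟨z, hfMc, hfM', e', ⟨he'M', he'Mc⟩, hze'⟩
    have hstep : ∀ x ∈ W, ∃ y ∈ W, Relation.TransGen (DMarc G A B M) x y := by
      intro x hxW
      by_cases hxB : x ∈ B
      · obtain ⟨z, hfMc, hfM', hzW⟩ := fStep x hxW
        have hfM : s(x, z) ∈ M := hInv1 ⟨hfMc, hfM'⟩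
        have hadj : G.Adj x z := (SimpleGraph.mem_edgeSet G).mp (hMc.1 hfMc)
        have hzA : z ∈ A := by
          rcases hadjAB hadj with ⟨hxA, _⟩ | ⟨_, hzA⟩
          · exact absurd hxB (Set.disjoint_left.mp hdisjAB hxA)
          · exact hzA
        exact ⟨z, hzW, Relation.TransGen.single ⟨hadj, Or.inr ⟨hxB, hzA, hfM⟩⟩⟩
      · have hxA : x ∈ A := by
          rcases (huniv ▸ Set.mem_univ x : x ∈ A ∪ B) with h | h
          · exact h
          · exact absurd h hxB
        obtain ⟨e, ⟨heM', heMc⟩, hxe⟩ := hxW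
        obtain ⟨x₁, rfl⟩ := Sym2.mem_iff_exists.mp hxe
        have heM : s(x, x₁) ∉ M := fun h => heMc (hInv2 ⟨h, heM'⟩)
        have hadj : G.Adj x x₁ := (SimpleGraph.mem_edgeSet G).mp (hM'.1.1 heM')
        have hx₁B : x₁ ∈ B := by
          rcases hadjAB hadj with ⟨_, h⟩ | ⟨h, _⟩
          · exact h
          · exact absurd h hxB
        have hx₁W : x₁ ∈ W := ⟨s(x, x₁), ⟨heM', heMc⟩, Sym2.mem_mk_right x x₁⟩
        obtain ⟨z, hfMc, hfM', hzW⟩ := fStep x₁ hx₁W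
        have hfM : s(x₁, z) ∈ M := hInv1 ⟨hfMc, hfM'⟩
        have hadj2 : G.Adj x₁ z := (SimpleGraph.mem_edgeSet G).mp (hMc.1 hfMc)
        have hzA : z ∈ A := by
          rcases hadjAB hadj2 with ⟨h, _⟩ | ⟨_, h⟩
          · exact absurd hx₁B (Set.disjoint_left.mp hdisjAB h)
          · exact h
        exact ⟨z, hzW, Relation.TransGen.head ⟨hadj, Or.inl ⟨hxA, hx₁B, heM⟩⟩
          (Relation.TransGen.single ⟨hadj2, Or.inr ⟨hx₁B, hzA, hfM⟩⟩)⟩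
    have hwf : WellFounded (flip (Relation.TransGen (DMarc G A B M))) :=
      @Finite.wellFounded_of_trans_of_irrefl V _ _
        ⟨fun a b c h1 h2 => Relation.TransGen.trans h2 h1⟩ ⟨hacyc⟩
    obtain ⟨e0, he0⟩ := hne
    obtain ⟨v0, hv0⟩ : ∃ v, v ∈ e0 := ⟨e0.out.1, Sym2.out_fst_mem e0⟩
    obtain ⟨m, hmW, hmin⟩ := hwf.has_min W ⟨v0, e0, he0, hv0⟩
    obtain ⟨y, hyW, hmy⟩ := hstep m hmW
    exact hmin y hyW hmy
  -- Step B: perform one edge exchange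
  obtain ⟨x, hxM', hxMc⟩ := hx
  obtain ⟨e, heM', hxe⟩ := hxM'
  obtain ⟨w, rfl⟩ := Sym2.mem_iff_exists.mp hxe
  have hadjxw : G.Adj x w := (SimpleGraph.mem_edgeSet G).mp (hM'.1.1 heM')
  have hwMc : w ∈ matVerts Mc := by
    by_contra hw
    have hnotin : s(x, w) ∉ Mc := fun h => hxMc ⟨_, h, Sym2.mem_mk_left x w⟩
    have hmatch : IsMatchingSet G (insert s(x, w) Mc) := by
      constructor
      · rintro f (rfl | hf)
        · exact hM'.1.1 heM'
        · exact hMc.1 hf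
      · rintro f (rfl | hf) g (rfl | hg) hfg v hvf hvg
        · exact hfg rfl
        · rcases Sym2.mem_iff.mp hvf with rfl | rfl
          · exact hxMc ⟨g, hg, hvg⟩
          · exact hw ⟨g, hg, hvg⟩
        · rcases Sym2.mem_iff.mp hvg with rfl | rfl
          · exact hxMc ⟨f, hf, hvf⟩
          · exact hw ⟨f, hf, hvf⟩
        · exact hMc.2 f hf g hg hfg v hvf hvg
    have hle : (insert s(x, w) Mc).ncard ≤ M.ncard := hM.2 _ hmatch
    rw [Set.ncard_insert_of_notMem hnotin (Set.toFinite _)] at hle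
    omega
  obtain ⟨f, hfMc, hwf⟩ := hwMc
  obtain ⟨z, rfl⟩ := Sym2.mem_iff_exists.mp hwf
  have hfne : s(w, z) ≠ s(x, w) :=
    fun hh => hxMc ⟨s(w, z), hfMc, by rw [hh]; exact Sym2.mem_mk_left x w⟩
  have hfM' : s(w, z) ∉ M' := fun h =>
    hM'.1.2 _ h _ heM' hfne w (Sym2.mem_mk_left w z) (Sym2.mem_mk_right x w)
  have hnotin : s(x, w) ∉ Mc := fun h => hxMc ⟨_, h, Sym2.mem_mk_left x w⟩
  have hkey : ∀ g ∈ Mc \ {s(w, z)}, ∀ v, v ∈ s(x, w) → v ∉ g := by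
    rintro g ⟨hgMc, hgne⟩ v hv hvg
    have hgne' : g ≠ s(w, z) := by simpa using hgne
    rcases Sym2.mem_iff.mp hv with h | h
    · exact hxMc ⟨g, hgMc, h ▸ hvg⟩
    · exact hMc.2 g hgMc _ hfMc hgne' w (h ▸ hvg) (Sym2.mem_mk_left w z)
  have hex : EdgeExchange G A B Mc ((Mc \ {s(w, z)}) ∪ {s(x, w)}) := by
    rcases (huniv ▸ Set.mem_univ x : x ∈ A ∪ B) with hxA | hxB
    · left
      refine ⟨x, z, w, hxA, hxMc, ?_, hadjxw, ?_⟩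
      · rw [Sym2.eq_swap]; exact hfMc
      · rw [Sym2.eq_swap (a := z) (b := w)]
    · right
      refine ⟨x, w, z, hxB, hxMc, hfMc, hadjxw.symm, ?_⟩
      rw [Sym2.eq_swap (a := w) (b := x)]
  have hMc1 : IsMatchingSet G ((Mc \ {s(w, z)}) ∪ {s(x, w)}) := by
    constructor
    · rintro g (⟨hg, _⟩ | hg)
      · exact hMc.1 hg
      · rw [Set.mem_singleton_iff] at hg; exact hg ▸ hM'.1.1 heM'
    · rintro g1 hg1 g2 hg2 hne12 v hv1 hv2
      rcases hg1 with hg1 | hg1 <;> rcases hg2 with hg2 | hg2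
      · exact hMc.2 g1 hg1.1 g2 hg2.1 hne12 v hv1 hv2
      · rw [Set.mem_singleton_iff] at hg2; subst hg2
        exact hkey g1 hg1 v hv2 hv1
      · rw [Set.mem_singleton_iff] at hg1; subst hg1
        exact hkey g2 hg2 v hv1 hv2
      · rw [Set.mem_singleton_iff] at hg1 hg2; exact hne12 (hg1.trans hg2.symm)
  have hcard1 : ((Mc \ {s(w, z)}) ∪ {s(x, w)}).ncard = M.ncard := by
    have h1 : s(x, w) ∉ Mc \ {s(w, z)} := fun h => hnotin h.1
    rw [Set.union_singleton, Set.ncard_insert_of_notMem h1 (Set.toFinite _),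
      Set.ncard_diff_singleton_add_one hfMc (Set.toFinite _), hcard]
  have hdiffeq : ((Mc \ {s(w, z)}) ∪ {s(x, w)}) \ M' = (Mc \ M') \ {s(w, z)} := by
    ext g
    constructor
    · rintro ⟨hg | hg, hgM'⟩
      · exact ⟨⟨hg.1, hgM'⟩, hg.2⟩
      · rw [Set.mem_singleton_iff] at hg; exact absurd (hg ▸ heM') hgM'
    · rintro ⟨⟨hgMc, hgM'⟩, hgne⟩
      exact ⟨Or.inl ⟨hgMc, hgne⟩, hgM'⟩
  have hmem : s(w, z) ∈ Mc \ M' := ⟨hfMc, hfM'⟩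
  have hlt : (((Mc \ {s(w, z)}) ∪ {s(x, w)}) \ M').ncard < n := by
    rw [hdiffeq]
    have := Set.ncard_diff_singleton_add_one hmem (Set.toFinite _)
    omega
  have hI1 : ((Mc \ {s(w, z)}) ∪ {s(x, w)}) \ M' ⊆ M := by
    rw [hdiffeq]; exact fun g hg => hInv1 hg.1
  have hI2 : M ∩ M' ⊆ (Mc \ {s(w, z)}) ∪ {s(x, w)} := by
    rintro g ⟨hgM, hgM'⟩
    refine Or.inl ⟨hInv2 ⟨hgM, hgM'⟩, ?_⟩
    intro h
    rw [Set.mem_singleton_iff] at h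
    exact hfM' (h ▸ hgM')
  exact Relation.ReflTransGen.head hex (ih _ hlt _ rfl hMc1 hcard1 hI1 hI2)
end
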